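/- arXiv:2409.10988 — 2 statements merged into one kernel-verified Lean document; each statement's English description precedes it below -/
import Mathlib

section
/- Let ω = e^{2πi/3} and let z ∈ ℂ satisfy Re(ωz) ≤ Re(ω²z) ≤ Re(z), |e^{(ω−1)z}| ≤ e^{−3/2}, and |e^{(ω²−1)z} − 1| > 1/3. Let 0 ≤ δ ≤ 1/300 and let G ∈ M₃(ℂ) satisfy |G_{jj} − 1| ≤ δ for j = 1,2,3 and |G_{jk}| ≤ δ for j ≠ k. Consider T = (e^{ω^j z} G_{jk})_{j,k=1}^3 and its Gershgorin row discs Γ_j = {τ ∈ ℂ : |τ − e^{ω^j z} G_{jj}| ≤ |e^{ω^j z}|·Σ_{k≠j}|G_{jk}|}. Then Γ₁ ∩ Γ₃ = ∅ and Γ₂ ∩ Γ₃ = ∅; T has exactly one eigenvalue τ₃ (of algebraic multiplicity one) in Γ₃; and |τ₃ − e^{z}| ≤ 3δ·|e^{z}|. If moreover z is real and the characteristic polynomial of T has real coefficients, then τ₃ is real and τ₃ ≥ e^{z}(1 − 3δ) > 0. -/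
open Matrix Complex Polynomial


private lemma cabs_add (x y : ℂ) : ‖x + y‖ ≤ ‖x‖ + ‖y‖ := by
  exact norm_add_le x y

private lemma cabs_sub (x y : ℂ) : ‖x - y‖ ≤ ‖x‖ + ‖y‖ := by
  exact norm_sub_le x y

private lemma cabs_lb (x y : ℂ) : ‖x‖ - ‖y‖ ≤ ‖x - y‖ := by
  exact norm_sub_norm_le x y

private lemma cabs_neg (x : ℂ) : ‖-x‖ = ‖x‖ := by
  exact norm_neg x

private lemma cabs_comm (x y : ℂ) : ‖x - y‖ = ‖y - x‖ := by
  exact norm_sub_rev x y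

private lemma cp_eval (T : Matrix (Fin 3) (Fin 3) ℂ) (τ : ℂ) :
    T.charpoly.eval τ =
      (τ - T 0 0) * ((τ - T 1 1) * (τ - T 2 2))
      - (τ - T 0 0) * (T 1 2 * T 2 1)
      - (τ - T 1 1) * (T 0 2 * T 2 0)
      - (τ - T 2 2) * (T 0 1 * T 1 0)
      - (T 0 1 * T 1 2 * T 2 0 + T 0 2 * T 1 0 * T 2 1) := by
  rw [Matrix.charpoly, Matrix.det_fin_three]
  simp [Matrix.charmatrix_apply_eq, Matrix.charmatrix_apply_ne,
    (by decide : (0:Fin 3) ≠ 1), (by decide : (0:Fin 3) ≠ 2), (by decide : (1:Fin 3) ≠ 0),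
    (by decide : (1:Fin 3) ≠ 2), (by decide : (2:Fin 3) ≠ 0), (by decide : (2:Fin 3) ≠ 1)]
  ring

private lemma cp_deriv (T : Matrix (Fin 3) (Fin 3) ℂ) (τ : ℂ) :
    (Polynomial.derivative T.charpoly).eval τ =
      (τ - T 1 1) * (τ - T 2 2) + (τ - T 0 0) * (τ - T 2 2) + (τ - T 0 0) * (τ - T 1 1)
      - (T 0 1 * T 1 0 + T 0 2 * T 2 0 + T 1 2 * T 2 1) := by
  have hp : T.charpoly =
      (X - C (T 0 0)) * ((X - C (T 1 1)) * (X - C (T 2 2)))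
      - (X - C (T 0 0)) * (C (T 1 2 * T 2 1))
      - (X - C (T 1 1)) * (C (T 0 2 * T 2 0))
      - (X - C (T 2 2)) * (C (T 0 1 * T 1 0))
      - C (T 0 1 * T 1 2 * T 2 0 + T 0 2 * T 1 0 * T 2 1) := by
    apply Polynomial.funext
    intro x
    rw [cp_eval]
    simp
  rw [hp]
  simp [Polynomial.derivative_mul]
  ring

private lemma root_gershgorin {T : Matrix (Fin 3) (Fin 3) ℂ} {τ : ℂ} (h : T.charpoly.IsRoot τ) :
    ∃ k, ‖τ - T k k‖ ≤ ∑ j ∈ Finset.univ.erase k, ‖T k j‖ := by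
  have hdet : (τ • (1 : Matrix (Fin 3) (Fin 3) ℂ) - T).det = 0 := by
    have he : T.charpoly.eval τ = 0 := h
    rw [Matrix.charpoly, Matrix.det_fin_three] at he
    simp only [Matrix.charmatrix_apply_eq, Matrix.charmatrix_apply_ne,
      (by decide : (0:Fin 3) ≠ 1), (by decide : (0:Fin 3) ≠ 2), (by decide : (1:Fin 3) ≠ 0),
      (by decide : (1:Fin 3) ≠ 2), (by decide : (2:Fin 3) ≠ 0), (by decide : (2:Fin 3) ≠ 1),
      ne_eq, not_false_eq_true, eval_sub, eval_mul, eval_add, eval_X, eval_C, eval_neg] at he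
    rw [Matrix.det_fin_three]
    norm_num [Matrix.sub_apply, Matrix.smul_apply, Matrix.one_apply,
      if_neg (by decide : ¬(1:Fin 3)=2), if_neg (by decide : ¬(2:Fin 3)=1),
      if_neg (by decide : ¬(2:Fin 3)=0), if_neg (by decide : ¬(0:Fin 3)=2),
      if_neg (by decide : ¬(0:Fin 3)=1), if_neg (by decide : ¬(1:Fin 3)=0)]
    linear_combination he
  obtain ⟨v, hv0, hv⟩ := (Matrix.exists_mulVec_eq_zero_iff).mpr hdet
  have hmv : T.mulVec v = τ • v := by
    rw [Matrix.sub_mulVec, Matrix.smul_mulVec, Matrix.one_mulVec] at hv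
    exact (sub_eq_zero.mp hv).symm
  have heig : Module.End.HasEigenvalue (Matrix.toLin' T) τ := by
    apply Module.End.hasEigenvalue_of_hasEigenvector (x := v)
    refine ⟨?_, hv0⟩
    rw [Module.End.mem_eigenspace_iff, Matrix.toLin'_apply, hmv]
  obtain ⟨k, hk⟩ := eigenvalue_mem_ball heig
  refine ⟨k, ?_⟩
  rw [Metric.mem_closedBall, Complex.dist_eq] at hk
  simpa using hk

private lemma prod_abs_lb (x : ℂ) (m : ℝ) (hm : 0 ≤ m) :
    ∀ (s : Multiset ℂ), (∀ r ∈ s, m ≤ ‖x - r‖) →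
      m ^ (Multiset.card s) ≤ ‖(s.map fun r => x - r).prod‖ := by
  intro s
  induction s using Multiset.induction with
  | empty => simp
  | cons r s ih =>
    intro h
    simp only [Multiset.map_cons, Multiset.prod_cons, Multiset.card_cons,
      norm_mul]
    rw [pow_succ]
    rw [mul_comm (m ^ Multiset.card s) m]
    apply mul_le_mul (h r (Multiset.mem_cons_self r s))
      (ih fun t ht => h t (Multiset.mem_cons_of_mem ht))
      (pow_nonneg hm _) (norm_nonneg _)

private lemma eval_eq_prod_roots {p : Polynomial ℂ} (hm : p.Monic) (x : ℂ) :
    p.eval x = (p.roots.map fun r => x - r).prod := by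
  conv_lhs => rw [(IsAlgClosed.splits p).eq_prod_roots_of_monic hm]
  rw [eval_multiset_prod, Multiset.map_map]
  simp [Function.comp]

private lemma roots_card_charpoly (T : Matrix (Fin 3) (Fin 3) ℂ) :
    Multiset.card T.charpoly.roots = 3 := by
  rw [Polynomial.splits_iff_card_roots.mp (IsAlgClosed.splits T.charpoly),
    Matrix.charpoly_natDegree_eq_dim T, Fintype.card_fin]

private lemma conj_root {p : Polynomial ℂ} (hc : ∀ i : ℕ, (p.coeff i).im = 0) {τ : ℂ}
    (h : p.IsRoot τ) : p.IsRoot ((starRingEnd ℂ) τ) := by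
  have hmap : p.map (starRingEnd ℂ) = p := by
    ext n
    rw [Polynomial.coeff_map]
    exact Complex.conj_eq_iff_im.mpr (hc n)
  have heq : p.eval ((starRingEnd ℂ) τ) = (starRingEnd ℂ) (p.eval τ) := by
    conv_lhs => rw [← hmap]
    rw [Polynomial.eval_map, Polynomial.eval₂_hom]
  rw [Polynomial.IsRoot, heq, h.eq_zero, map_zero]

set_option maxHeartbeats 2000000 in
/-- Gershgorin separation for `T = (e^{ω^j z} G_{jk})`. Under the stated
conditions on `z` and the perturbation bounds `δ ≤ 1/300` on `G`, the Gershgorin disc `Γ₃`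
is disjoint from `Γ₁` and `Γ₂`, `T` has exactly one eigenvalue `τ₃` in `Γ₃`, of algebraic
multiplicity one, with `|τ₃ − e^z| ≤ 3δ|e^z|`; and if `z` is real and the characteristic
polynomial of `T` has real coefficients, then `τ₃` is real and `τ₃ ≥ e^z(1 − 3δ) > 0`. -/
theorem gershgorin_multiplier
    (ω z : ℂ) (hω : ω = Complex.exp (2 * Real.pi * Complex.I / 3))
    (hre1 : (ω * z).re ≤ (ω ^ 2 * z).re) (hre2 : (ω ^ 2 * z).re ≤ z.re)
    (he1 : ‖Complex.exp ((ω - 1) * z)‖ ≤ Real.exp (-(3/2)))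
    (he2 : 1/3 < ‖Complex.exp ((ω ^ 2 - 1) * z) - 1‖)
    (δ : ℝ) (hδ0 : 0 ≤ δ) (hδ : δ ≤ 1/300)
    (G : Matrix (Fin 3) (Fin 3) ℂ)
    (hGd : ∀ j : Fin 3, ‖G j j - 1‖ ≤ δ)
    (hGo : ∀ j k : Fin 3, j ≠ k → ‖G j k‖ ≤ δ)
    (T : Matrix (Fin 3) (Fin 3) ℂ)
    (hT : T = Matrix.of fun (j k : Fin 3) => Complex.exp (ω ^ ((j : ℕ) + 1) * z) * G j k)
    (Γ : Fin 3 → Set ℂ)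
    (hΓ : ∀ j : Fin 3, Γ j = {τ : ℂ |
      ‖τ - Complex.exp (ω ^ ((j : ℕ) + 1) * z) * G j j‖
        ≤ ‖Complex.exp (ω ^ ((j : ℕ) + 1) * z)‖ *
            ∑ k ∈ Finset.univ.erase j, ‖G j k‖}) :
    Γ 0 ∩ Γ 2 = ∅ ∧ Γ 1 ∩ Γ 2 = ∅ ∧
    ∃ τ₃ : ℂ, τ₃ ∈ Γ 2 ∧ T.charpoly.IsRoot τ₃ ∧
      T.charpoly.rootMultiplicity τ₃ = 1 ∧
      (∀ τ : ℂ, τ ∈ Γ 2 → T.charpoly.IsRoot τ → τ = τ₃) ∧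
      ‖τ₃ - Complex.exp z‖ ≤ 3 * δ * ‖Complex.exp z‖ ∧
      (z.im = 0 → (∀ i : ℕ, (T.charpoly.coeff i).im = 0) →
        τ₃.im = 0 ∧ Real.exp z.re * (1 - 3 * δ) ≤ τ₃.re ∧ 0 < τ₃.re) := by
  have hω3 : ω ^ 3 = 1 := by
    rw [hω, ← Complex.exp_nat_mul]
    rw [show ((3:ℕ):ℂ) * (2 * (Real.pi:ℂ) * Complex.I / 3) = 2 * (Real.pi:ℂ) * Complex.I by
      push_cast; ring]
    exact Complex.exp_two_pi_mul_I
  -- exponentials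
  set eA := Complex.exp (ω * z) with heA
  set eB := Complex.exp (ω ^ 2 * z) with heB
  set eC := Complex.exp z with heC
  set a := ‖eA‖ with ha_def
  set b := ‖eB‖ with hb_def
  set c := ‖eC‖ with hc_def
  -- rows of T
  have hT0 : ∀ k, T 0 k = eA * G 0 k := fun k => by rw [hT]; simp [heA]
  have hT1 : ∀ k, T 1 k = eB * G 1 k := fun k => by
    rw [hT]; simp only [Matrix.of_apply]; norm_num [heB]
  have hT2 : ∀ k, T 2 k = eC * G 2 k := fun k => by
    rw [hT]; simp only [Matrix.of_apply]; norm_num [hω3, heC]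
  -- basic real facts
  have hc : 0 < c := norm_pos_iff.mpr (Complex.exp_ne_zero z)
  have ha0 : 0 ≤ a := norm_nonneg _
  have hb0 : 0 ≤ b := norm_nonneg _
  have hab : a ≤ b := by
    rw [ha_def, hb_def, heA, heB, Complex.norm_exp, Complex.norm_exp]
    exact Real.exp_le_exp.mpr hre1
  have hbc : b ≤ c := by
    rw [hb_def, hc_def, heB, heC, Complex.norm_exp, Complex.norm_exp]
    exact Real.exp_le_exp.mpr hre2
  have hac37 : a ≤ 0.37 * c := by
    have h1 : eA = Complex.exp ((ω - 1) * z) * eC := by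
      rw [heA, heC, ← Complex.exp_add]; ring_nf
    have h2 : a = ‖Complex.exp ((ω - 1) * z)‖ * c := by
      rw [ha_def, h1, norm_mul]
    have h3 : Real.exp (-(3/2 : ℝ)) ≤ 0.37 := by
      have h4 : Real.exp (-(3/2 : ℝ)) ≤ (Real.exp 1)⁻¹ := by
        rw [← Real.exp_neg]; exact Real.exp_le_exp.mpr (by norm_num)
      have h5 := Real.exp_one_gt_d9
      have h6 : (Real.exp 1)⁻¹ * Real.exp 1 = 1 := inv_mul_cancel₀ (ne_of_gt (Real.exp_pos 1))
      nlinarith [Real.exp_pos 1, inv_nonneg.mpr (Real.exp_pos 1).le]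
    rw [h2]
    calc ‖Complex.exp ((ω - 1) * z)‖ * c ≤ 0.37 * c :=
          mul_le_mul_of_nonneg_right (le_trans he1 h3) hc.le
      _ = 0.37 * c := rfl
  have hac : a ≤ c := by nlinarith
  have hBC : c * (1/3) < ‖eB - eC‖ := by
    have h1 : eB - eC = eC * (Complex.exp ((ω ^ 2 - 1) * z) - 1) := by
      rw [heB, heC, mul_sub, mul_one, ← Complex.exp_add]; ring_nf
    rw [h1, norm_mul, ← hc_def]
    exact mul_lt_mul_of_pos_left he2 hc
  -- G entry bounds
  have hGd' : ∀ j, ‖G j j‖ ≤ 1 + δ := by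
    intro j
    calc ‖G j j‖ = ‖(G j j - 1) + 1‖ := by congr 1; ring
      _ ≤ ‖G j j - 1‖ + ‖1‖ := cabs_add _ _
      _ ≤ 1 + δ := by rw [norm_one]; linarith [hGd j]
  have hG22 : 1 - δ ≤ ‖G 2 2‖ := by
    have h1 : ‖(1:ℂ)‖ ≤ ‖(1:ℂ) - G 2 2‖ + ‖G 2 2‖ := by
      calc ‖(1:ℂ)‖ = ‖((1:ℂ) - G 2 2) + G 2 2‖ := by congr 1; ring
        _ ≤ _ := cabs_add _ _
    rw [norm_one, cabs_comm] at h1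
    linarith [hGd 2]
  -- diagonal bounds
  have hd0 : ‖T 0 0‖ ≤ a * (1 + δ) := by
    rw [hT0 0, norm_mul]; exact mul_le_mul_of_nonneg_left (hGd' 0) ha0
  have hd1 : ‖T 1 1‖ ≤ b * (1 + δ) := by
    rw [hT1 1, norm_mul]; exact mul_le_mul_of_nonneg_left (hGd' 1) hb0
  have hd2 : ‖T 2 2‖ ≤ c * (1 + δ) := by
    rw [hT2 2, norm_mul]; exact mul_le_mul_of_nonneg_left (hGd' 2) hc.le
  have hd2lb : c * (1 - δ) ≤ ‖T 2 2‖ := by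
    rw [hT2 2, norm_mul]; exact mul_le_mul_of_nonneg_left hG22 hc.le
  -- off-diagonal bounds
  have ho01 : ‖T 0 1‖ ≤ a * δ := by
    rw [hT0 1, norm_mul]; exact mul_le_mul_of_nonneg_left (hGo 0 1 (by decide)) ha0
  have ho02 : ‖T 0 2‖ ≤ a * δ := by
    rw [hT0 2, norm_mul]; exact mul_le_mul_of_nonneg_left (hGo 0 2 (by decide)) ha0
  have ho10 : ‖T 1 0‖ ≤ b * δ := by
    rw [hT1 0, norm_mul]; exact mul_le_mul_of_nonneg_left (hGo 1 0 (by decide)) hb0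
  have ho12 : ‖T 1 2‖ ≤ b * δ := by
    rw [hT1 2, norm_mul]; exact mul_le_mul_of_nonneg_left (hGo 1 2 (by decide)) hb0
  have ho20 : ‖T 2 0‖ ≤ c * δ := by
    rw [hT2 0, norm_mul]; exact mul_le_mul_of_nonneg_left (hGo 2 0 (by decide)) hc.le
  have ho21 : ‖T 2 1‖ ≤ c * δ := by
    rw [hT2 1, norm_mul]; exact mul_le_mul_of_nonneg_left (hGo 2 1 (by decide)) hc.le
  -- products with δ
  have hu := mul_le_mul_of_nonneg_left hδ hc.le  -- c * δ ≤ c * (1/300)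
  have hu0 : 0 ≤ c * δ := mul_nonneg hc.le hδ0
  have hbδ : b * δ ≤ c * δ := mul_le_mul_of_nonneg_right hbc hδ0
  have haδ : a * δ ≤ c * δ := mul_le_mul_of_nonneg_right hac hδ0
  -- |d1 - d2| lower bound
  have hd12 : c * (1/3) - b * δ - c * δ ≤ ‖T 1 1 - T 2 2‖ := by
    have hsplit : eB - eC = ((T 1 1 - T 2 2) - eB * (G 1 1 - 1)) + eC * (G 2 2 - 1) := by
      rw [hT1 1, hT2 2]; ring
    have h1 : ‖eB - eC‖ ≤
        ‖T 1 1 - T 2 2‖ + ‖eB * (G 1 1 - 1)‖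
          + ‖eC * (G 2 2 - 1)‖ := by
      rw [hsplit]
      calc ‖_‖ ≤ ‖(T 1 1 - T 2 2) - eB * (G 1 1 - 1)‖
            + ‖eC * (G 2 2 - 1)‖ := cabs_add _ _
        _ ≤ _ := by
            have := cabs_sub (T 1 1 - T 2 2) (eB * (G 1 1 - 1))
            linarith
    rw [norm_mul, norm_mul] at h1
    have h2 : b * ‖G 1 1 - 1‖ ≤ b * δ :=
      mul_le_mul_of_nonneg_left (hGd 1) hb0
    have h3 : c * ‖G 2 2 - 1‖ ≤ c * δ :=
      mul_le_mul_of_nonneg_left (hGd 2) hc.le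
    linarith [hBC]
  -- Γ sets description
  have herase0 : (Finset.univ.erase (0:Fin 3)) = {1, 2} := by decide
  have herase1 : (Finset.univ.erase (1:Fin 3)) = {0, 2} := by decide
  have herase2 : (Finset.univ.erase (2:Fin 3)) = {0, 1} := by decide
  have hg0 : Γ 0 = {τ : ℂ | ‖τ - T 0 0‖
      ≤ a * (‖G 0 1‖ + ‖G 0 2‖)} := by
    rw [hΓ 0]
    ext τ
    simp only [Set.mem_setOf_eq]
    rw [show (((0:Fin 3):ℕ)+1) = 1 from rfl, pow_one, ← heA, ← hT0 0, herase0,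
      Finset.sum_insert (by decide), Finset.sum_singleton, ← ha_def]
  have hg1 : Γ 1 = {τ : ℂ | ‖τ - T 1 1‖
      ≤ b * (‖G 1 0‖ + ‖G 1 2‖)} := by
    rw [hΓ 1]
    ext τ
    simp only [Set.mem_setOf_eq]
    rw [show (((1:Fin 3):ℕ)+1) = 2 from rfl, ← heB, ← hT1 1, herase1,
      Finset.sum_insert (by decide), Finset.sum_singleton, ← hb_def]
  have hg2 : Γ 2 = {τ : ℂ | ‖τ - T 2 2‖
      ≤ c * (‖G 2 0‖ + ‖G 2 1‖)} := by
    rw [hΓ 2]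
    ext τ
    simp only [Set.mem_setOf_eq]
    rw [show (((2:Fin 3):ℕ)+1) = 3 from rfl, hω3, one_mul, ← heC, ← hT2 2, herase2,
      Finset.sum_insert (by decide), Finset.sum_singleton, ← hc_def]
  have hΓ0sub : ∀ τ ∈ Γ 0, ‖τ - T 0 0‖ ≤ 2 * (a * δ) := by
    intro τ hτ
    rw [hg0] at hτ
    have h1 : a * (‖G 0 1‖ + ‖G 0 2‖) ≤ a * (δ + δ) := by
      have := hGo 0 1 (by decide); have := hGo 0 2 (by decide)
      apply mul_le_mul_of_nonneg_left (by linarith) ha0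
    have := hτ
    simp only [Set.mem_setOf_eq] at this
    linarith
  have hΓ1sub : ∀ τ ∈ Γ 1, ‖τ - T 1 1‖ ≤ 2 * (b * δ) := by
    intro τ hτ
    rw [hg1] at hτ
    have h1 : b * (‖G 1 0‖ + ‖G 1 2‖) ≤ b * (δ + δ) := by
      have := hGo 1 0 (by decide); have := hGo 1 2 (by decide)
      apply mul_le_mul_of_nonneg_left (by linarith) hb0
    have := hτ
    simp only [Set.mem_setOf_eq] at this
    linarith
  have hΓ2sub : ∀ τ ∈ Γ 2, ‖τ - T 2 2‖ ≤ 2 * (c * δ) := by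
    intro τ hτ
    rw [hg2] at hτ
    have h1 : c * (‖G 2 0‖ + ‖G 2 1‖) ≤ c * (δ + δ) := by
      have := hGo 2 0 (by decide); have := hGo 2 1 (by decide)
      apply mul_le_mul_of_nonneg_left (by linarith) hc.le
    have := hτ
    simp only [Set.mem_setOf_eq] at this
    linarith
  -- Gershgorin: every root is in some Γ
  have hroot_mem : ∀ τ : ℂ, T.charpoly.IsRoot τ → τ ∈ Γ 0 ∨ τ ∈ Γ 1 ∨ τ ∈ Γ 2 := by
    intro τ hτ
    obtain ⟨k, hk⟩ := root_gershgorin hτ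
    fin_cases k
    · left
      replace hk : ‖τ - T 0 0‖ ≤
        ∑ j ∈ Finset.univ.erase (0:Fin 3), ‖T 0 j‖ := hk
      rw [herase0, Finset.sum_insert (by decide), Finset.sum_singleton,
        hT0 1, hT0 2, norm_mul, norm_mul, ← ha_def] at hk
      rw [hg0]
      simp only [Set.mem_setOf_eq]
      calc ‖τ - T 0 0‖ ≤ a * ‖G 0 1‖ + a * ‖G 0 2‖ := hk
        _ = a * (‖G 0 1‖ + ‖G 0 2‖) := by ring
    · right; left
      replace hk : ‖τ - T 1 1‖ ≤
        ∑ j ∈ Finset.univ.erase (1:Fin 3), ‖T 1 j‖ := hk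
      rw [herase1, Finset.sum_insert (by decide), Finset.sum_singleton,
        hT1 0, hT1 2, norm_mul, norm_mul, ← hb_def] at hk
      rw [hg1]
      simp only [Set.mem_setOf_eq]
      calc ‖τ - T 1 1‖ ≤ b * ‖G 1 0‖ + b * ‖G 1 2‖ := hk
        _ = b * (‖G 1 0‖ + ‖G 1 2‖) := by ring
    · right; right
      replace hk : ‖τ - T 2 2‖ ≤
        ∑ j ∈ Finset.univ.erase (2:Fin 3), ‖T 2 j‖ := hk
      rw [herase2, Finset.sum_insert (by decide), Finset.sum_singleton,
        hT2 0, hT2 1, norm_mul, norm_mul, ← hc_def] at hk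
      rw [hg2]
      simp only [Set.mem_setOf_eq]
      calc ‖τ - T 2 2‖ ≤ c * ‖G 2 0‖ + c * ‖G 2 1‖ := hk
        _ = c * (‖G 2 0‖ + ‖G 2 1‖) := by ring
  -- key nonvanishing quantity
  have hkey : ∀ r r' : ℂ, ‖r - T 2 2‖ ≤ 2 * (c * δ) →
      ‖r' - T 2 2‖ ≤ 2 * (c * δ) →
      (r - T 0 0) * (r - T 1 1) + (r' - T 2 2) * (r + r' - T 0 0 - T 1 1)
        - (T 0 1 * T 1 0 + T 0 2 * T 2 0 + T 1 2 * T 2 1) ≠ 0 := by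
    intro r r' hr hr' hg
    have hrub : ‖r‖ ≤ c * (1 + δ) + 2 * (c * δ) := by
      have h1 := cabs_lb r (T 2 2); linarith
    have hrlb : c * (1 - δ) - 2 * (c * δ) ≤ ‖r‖ := by
      have h1 := cabs_lb (T 2 2) r
      rw [cabs_comm (T 2 2) r] at h1
      linarith
    have hr'ub : ‖r'‖ ≤ c * (1 + δ) + 2 * (c * δ) := by
      have h1 := cabs_lb r' (T 2 2); linarith
    have hq1 : 0.6 * c ≤ ‖r - T 0 0‖ := by
      have h1 := cabs_lb r (T 0 0)
      have h2 : a * (1 + δ) ≤ 0.37 * c + c * δ := by nlinarith [hac37, haδ]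
      linarith
    have hq2 : (8/25) * c ≤ ‖r - T 1 1‖ := by
      have h1 := cabs_lb (T 1 1 - T 2 2) (r - T 2 2)
      have h2 : (T 1 1 - T 2 2) - (r - T 2 2) = -(r - T 1 1) := by ring
      rw [h2, cabs_neg] at h1
      linarith
    have hprod : (0.6 * c) * ((8/25) * c) ≤
        ‖r - T 0 0‖ * ‖r - T 1 1‖ :=
      mul_le_mul hq1 hq2 (by linarith) (norm_nonneg _)
    have heq : (r - T 0 0) * (r - T 1 1) =
        (T 0 1 * T 1 0 + T 0 2 * T 2 0 + T 1 2 * T 2 1)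
          - (r' - T 2 2) * (r + r' - T 0 0 - T 1 1) := by
      linear_combination hg
    have hS : ‖r + r' - T 0 0 - T 1 1‖
        ≤ 2 * (c * (1 + δ) + 2 * (c * δ)) + a * (1 + δ) + b * (1 + δ) := by
      have t1 := cabs_sub (r + r' - T 0 0) (T 1 1)
      have t2 := cabs_sub (r + r') (T 0 0)
      have t3 := cabs_add r r'
      linarith
    have hE : ‖T 0 1 * T 1 0 + T 0 2 * T 2 0 + T 1 2 * T 2 1‖
        ≤ 3 * ((c * δ) * (c * δ)) := by
      have t1 := cabs_add (T 0 1 * T 1 0 + T 0 2 * T 2 0) (T 1 2 * T 2 1)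
      have t2 := cabs_add (T 0 1 * T 1 0) (T 0 2 * T 2 0)
      simp only [norm_mul] at t1 t2
      have m1 : ‖T 0 1‖ * ‖T 1 0‖ ≤ (c * δ) * (c * δ) :=
        mul_le_mul (le_trans ho01 haδ) (le_trans ho10 hbδ) (norm_nonneg _) hu0
      have m2 : ‖T 0 2‖ * ‖T 2 0‖ ≤ (c * δ) * (c * δ) :=
        mul_le_mul (le_trans ho02 haδ) ho20 (norm_nonneg _) hu0
      have m3 : ‖T 1 2‖ * ‖T 2 1‖ ≤ (c * δ) * (c * δ) :=
        mul_le_mul (le_trans ho12 hbδ) ho21 (norm_nonneg _) hu0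
      linarith
    have hM : ‖(r' - T 2 2) * (r + r' - T 0 0 - T 1 1)‖
        ≤ (2 * (c * δ)) * (2 * (c * (1 + δ) + 2 * (c * δ)) + a * (1 + δ) + b * (1 + δ)) := by
      rw [norm_mul]
      apply mul_le_mul hr' hS (norm_nonneg _)
      nlinarith
    have hup : ‖(r - T 0 0) * (r - T 1 1)‖
        ≤ 3 * ((c * δ) * (c * δ))
          + (2 * (c * δ)) * (2 * (c * (1 + δ) + 2 * (c * δ)) + a * (1 + δ) + b * (1 + δ)) := by
      rw [heq]
      have := cabs_sub (T 0 1 * T 1 0 + T 0 2 * T 2 0 + T 1 2 * T 2 1)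
        ((r' - T 2 2) * (r + r' - T 0 0 - T 1 1))
      linarith
    rw [norm_mul] at hup
    have hcc : c * δ * (c * δ) ≤ c * (1/300) * (c * δ) :=
      mul_le_mul_of_nonneg_right hu hu0
    have hcc2 : c * δ * c ≤ c * (1/300) * c :=
      mul_le_mul_of_nonneg_right hu hc.le
    nlinarith [mul_pos hc hc]
  -- uniqueness of roots in the disc
  have huniq : ∀ r r' : ℂ, T.charpoly.IsRoot r → T.charpoly.IsRoot r' →
      ‖r - T 2 2‖ ≤ 2 * (c * δ) → ‖r' - T 2 2‖ ≤ 2 * (c * δ) →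
      r = r' := by
    intro r r' h h' hd hd'
    by_contra hne
    have h0 : (r - r') * ((r - T 0 0) * (r - T 1 1)
        + (r' - T 2 2) * (r + r' - T 0 0 - T 1 1)
        - (T 0 1 * T 1 0 + T 0 2 * T 2 0 + T 1 2 * T 2 1)) = 0 := by
      have hiden : T.charpoly.eval r - T.charpoly.eval r' = (r - r') *
          ((r - T 0 0) * (r - T 1 1) + (r' - T 2 2) * (r + r' - T 0 0 - T 1 1)
            - (T 0 1 * T 1 0 + T 0 2 * T 2 0 + T 1 2 * T 2 1)) := by
        rw [cp_eval, cp_eval]; ring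
      have e1 : T.charpoly.eval r = 0 := h
      have e2 : T.charpoly.eval r' = 0 := h'
      rw [e1, e2, sub_zero] at hiden
      exact hiden.symm
    rcases mul_eq_zero.mp h0 with h1 | h2
    · exact hne (sub_eq_zero.mp h1)
    · exact hkey r r' hd hd' h2
  -- the characteristic polynomial
  have hmono : T.charpoly.Monic := T.charpoly_monic
  have hpne : T.charpoly ≠ 0 := hmono.ne_zero
  -- existence of a root in Γ 2
  have hex : ∃ r, T.charpoly.IsRoot r ∧ r ∈ Γ 2 := by
    by_contra hno
    push_neg at hno
    have hall : ∀ r ∈ T.charpoly.roots, (8/25) * c ≤ ‖T 2 2 - r‖ := by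
      intro r hrr
      have hroot : T.charpoly.IsRoot r := (Polynomial.mem_roots hpne).mp hrr
      rcases hroot_mem r hroot with h0 | h1 | h2
      · have hr0 := hΓ0sub r h0
        have h3 := cabs_lb (T 2 2) r
        have h4 := cabs_lb r (T 0 0)
        nlinarith
      · have hr1 := hΓ1sub r h1
        have h3 := cabs_lb (T 1 1 - T 2 2) (T 1 1 - r)
        have h4 : (T 1 1 - T 2 2) - (T 1 1 - r) = -(T 2 2 - r) := by ring
        rw [h4, cabs_neg] at h3
        have h5 : ‖T 1 1 - r‖ = ‖r - T 1 1‖ := cabs_comm _ _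
        linarith
      · exact absurd h2 (hno r hroot)
    have hcube := prod_abs_lb (T 2 2) ((8/25) * c) (by linarith) T.charpoly.roots hall
    rw [roots_card_charpoly T, ← eval_eq_prod_roots hmono] at hcube
    -- upper bound on |p(T 2 2)|
    have hpd2 : T.charpoly.eval (T 2 2) =
        -((T 2 2 - T 0 0) * (T 1 2 * T 2 1) + (T 2 2 - T 1 1) * (T 0 2 * T 2 0)
          + (T 0 1 * T 1 2 * T 2 0 + T 0 2 * T 1 0 * T 2 1)) := by
      rw [cp_eval]; ring
    have e1 : ‖T 2 2 - T 0 0‖ ≤ 2 * c + 2 * (c * δ) := by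
      have := cabs_sub (T 2 2) (T 0 0); nlinarith
    have e2 : ‖T 2 2 - T 1 1‖ ≤ 2 * c + 2 * (c * δ) := by
      have := cabs_sub (T 2 2) (T 1 1); nlinarith
    have m1 : ‖T 2 2 - T 0 0‖ * (‖T 1 2‖ * ‖T 2 1‖)
        ≤ (2 * c + 2 * (c * δ)) * ((c * δ) * (c * δ)) := by
      apply mul_le_mul e1 (mul_le_mul (le_trans ho12 hbδ) ho21 (norm_nonneg _) hu0)
        (mul_nonneg (norm_nonneg _) (norm_nonneg _)) (by nlinarith)
    have m2 : ‖T 2 2 - T 1 1‖ * (‖T 0 2‖ * ‖T 2 0‖)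
        ≤ (2 * c + 2 * (c * δ)) * ((c * δ) * (c * δ)) := by
      apply mul_le_mul e2 (mul_le_mul (le_trans ho02 haδ) ho20 (norm_nonneg _) hu0)
        (mul_nonneg (norm_nonneg _) (norm_nonneg _)) (by nlinarith)
    have m3 : ‖T 0 1‖ * ‖T 1 2‖ * ‖T 2 0‖
        ≤ (c * δ) * (c * δ) * (c * δ) := by
      apply mul_le_mul (mul_le_mul (le_trans ho01 haδ) (le_trans ho12 hbδ)
        (norm_nonneg _) hu0) ho20 (norm_nonneg _) (mul_nonneg hu0 hu0)
    have m4 : ‖T 0 2‖ * ‖T 1 0‖ * ‖T 2 1‖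
        ≤ (c * δ) * (c * δ) * (c * δ) := by
      apply mul_le_mul (mul_le_mul (le_trans ho02 haδ) (le_trans ho10 hbδ)
        (norm_nonneg _) hu0) ho21 (norm_nonneg _) (mul_nonneg hu0 hu0)
    have hub : ‖T.charpoly.eval (T 2 2)‖
        ≤ 2 * ((2 * c + 2 * (c * δ)) * ((c * δ) * (c * δ)))
          + 2 * ((c * δ) * (c * δ) * (c * δ)) := by
      rw [hpd2, cabs_neg]
      have t1 := cabs_add ((T 2 2 - T 0 0) * (T 1 2 * T 2 1) + (T 2 2 - T 1 1) * (T 0 2 * T 2 0))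
        (T 0 1 * T 1 2 * T 2 0 + T 0 2 * T 1 0 * T 2 1)
      have t2 := cabs_add ((T 2 2 - T 0 0) * (T 1 2 * T 2 1)) ((T 2 2 - T 1 1) * (T 0 2 * T 2 0))
      have t3 := cabs_add (T 0 1 * T 1 2 * T 2 0) (T 0 2 * T 1 0 * T 2 1)
      simp only [norm_mul] at t1 t2 t3
      linarith
    have hcc : c * δ * (c * δ) ≤ c * (1/300) * (c * δ) :=
      mul_le_mul_of_nonneg_right hu hu0
    have hcc2 : c * δ * c ≤ c * (1/300) * c :=
      mul_le_mul_of_nonneg_right hu hc.le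
    nlinarith [mul_pos hc hc, mul_pos (mul_pos hc hc) hc, hcube, hub]
  obtain ⟨τ₃, hτroot, hτΓ2⟩ := hex
  have hτd : ‖τ₃ - T 2 2‖ ≤ 2 * (c * δ) := hΓ2sub τ₃ hτΓ2
  -- distance to e^z
  have hd2C : ‖T 2 2 - eC‖ ≤ c * δ := by
    have h1 : T 2 2 - eC = eC * (G 2 2 - 1) := by rw [hT2 2]; ring
    rw [h1, norm_mul, ← hc_def]
    exact mul_le_mul_of_nonneg_left (hGd 2) hc.le
  have hτC : ‖τ₃ - eC‖ ≤ 3 * (c * δ) := by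
    have h1 := cabs_add (τ₃ - T 2 2) (T 2 2 - eC)
    have h2 : (τ₃ - T 2 2) + (T 2 2 - eC) = τ₃ - eC := by ring
    rw [h2] at h1
    linarith
  refine ⟨?_, ?_, τ₃, hτΓ2, hτroot, ?_, ?_, ?_, ?_⟩
  · -- Γ 0 ∩ Γ 2 = ∅
    ext τ
    simp only [Set.mem_inter_iff, Set.mem_empty_iff_false, iff_false, not_and]
    intro h0 h2
    exfalso
    have ha1 := hΓ0sub τ h0
    have ha2 := hΓ2sub τ h2
    have l1 := cabs_lb τ (T 0 0)
    have l2 := cabs_lb (T 2 2) τ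
    rw [cabs_comm (T 2 2) τ] at l2
    nlinarith
  · -- Γ 1 ∩ Γ 2 = ∅
    ext τ
    simp only [Set.mem_inter_iff, Set.mem_empty_iff_false, iff_false, not_and]
    intro h1 h2
    exfalso
    have ha1 := hΓ1sub τ h1
    have ha2 := hΓ2sub τ h2
    have l1 : ‖T 1 1 - T 2 2‖ ≤ ‖τ - T 1 1‖ + ‖τ - T 2 2‖ := by
      have t := cabs_add (T 1 1 - τ) (τ - T 2 2)
      have h3 : (T 1 1 - τ) + (τ - T 2 2) = T 1 1 - T 2 2 := by ring
      rw [h3, cabs_comm (T 1 1) τ] at t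
      linarith
    nlinarith
  · -- root multiplicity = 1
    have hder : (Polynomial.derivative T.charpoly).eval τ₃ ≠ 0 := by
      intro hcontra
      apply hkey τ₃ τ₃ hτd hτd
      have h1 := cp_deriv T τ₃
      rw [hcontra] at h1
      linear_combination -h1
    have hge1 : 0 < T.charpoly.rootMultiplicity τ₃ :=
      (Polynomial.rootMultiplicity_pos hpne).mpr hτroot
    have hle1 : ¬ (1 < T.charpoly.rootMultiplicity τ₃) := by
      intro hgt
      exact hder ((Polynomial.one_lt_rootMultiplicity_iff_isRoot hpne).mp hgt).2
    omega
  · -- uniqueness in Γ 2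
    intro τ hmem hroot
    exact huniq τ τ₃ hroot hτroot (hΓ2sub τ hmem) hτd
  · -- |τ₃ - e^z| ≤ 3δ|e^z|
    linarith only [hτC]
  · -- reality
    intro him hcoeffs
    have hzre : z = ((z.re : ℝ) : ℂ) := by
      apply Complex.ext <;> simp [him]
    have hCr : eC = ((Real.exp z.re : ℝ) : ℂ) := by
      rw [heC, hzre, ← Complex.ofReal_exp]
      norm_num
    have hconj : T.charpoly.IsRoot ((starRingEnd ℂ) τ₃) := conj_root hcoeffs hτroot
    have hct : ‖(starRingEnd ℂ) τ₃ - eC‖ = ‖τ₃ - eC‖ := by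
      rw [hCr, show (starRingEnd ℂ) τ₃ - ((Real.exp z.re : ℝ) : ℂ)
          = (starRingEnd ℂ) (τ₃ - ((Real.exp z.re : ℝ) : ℂ)) by
        rw [map_sub, Complex.conj_ofReal]]
      exact Complex.norm_conj _
    have hτabs : c * (1 - δ) - 2 * (c * δ) ≤ ‖τ₃‖ := by
      have h1 := cabs_lb (T 2 2) τ₃
      rw [cabs_comm (T 2 2) τ₃] at h1
      linarith
    have hmem2 : ((starRingEnd ℂ) τ₃) ∈ Γ 2 := by
      rcases hroot_mem _ hconj with h0 | h1 | h2
      · exfalso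
        have ha1 := hΓ0sub _ h0
        have l1 := cabs_lb ((starRingEnd ℂ) τ₃) (T 0 0)
        rw [Complex.norm_conj] at l1
        linarith only [hτabs, hd0, hac37, haδ, hu, hc, ha1, l1]
      · exfalso
        have ha1 := hΓ1sub _ h1
        have l1 : ‖T 1 1 - T 2 2‖
            ≤ ‖(starRingEnd ℂ) τ₃ - T 1 1‖ + ‖(starRingEnd ℂ) τ₃ - eC‖
              + ‖eC - T 2 2‖ := by
          have t1 := cabs_add (T 1 1 - (starRingEnd ℂ) τ₃)
            ((starRingEnd ℂ) τ₃ - eC)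
          have t2 := cabs_add ((T 1 1 - (starRingEnd ℂ) τ₃) + ((starRingEnd ℂ) τ₃ - eC))
            (eC - T 2 2)
          have h3 : (T 1 1 - (starRingEnd ℂ) τ₃) + ((starRingEnd ℂ) τ₃ - eC) + (eC - T 2 2)
              = T 1 1 - T 2 2 := by ring
          rw [h3] at t2
          rw [cabs_comm (T 1 1) ((starRingEnd ℂ) τ₃)] at t1
          linarith
        rw [hct, cabs_comm eC (T 2 2)] at l1
        linarith only [l1, ha1, hτC, hd2C, hd12, hbδ, hu, hc]
      · exact h2
    have hceq : (starRingEnd ℂ) τ₃ = τ₃ :=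
      huniq _ τ₃ hconj hτroot (hΓ2sub _ hmem2) hτd
    have him3 : τ₃.im = 0 := by
      have h1 := congrArg Complex.im hceq
      simp only [Complex.conj_im] at h1
      linarith
    have hcre : c = Real.exp z.re := by rw [hc_def, heC]; exact Complex.norm_exp z
    have hre3 : |τ₃.re - Real.exp z.re| ≤ 3 * (c * δ) := by
      have h1 : τ₃.re - Real.exp z.re = (τ₃ - eC).re := by
        rw [hCr]; simp only [Complex.sub_re, Complex.ofReal_re]
      rw [h1]
      exact le_trans (Complex.abs_re_le_norm _) hτC
    rcases abs_le.mp hre3 with ⟨hre4, _⟩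
    have h9 : Real.exp z.re * (1 - 3 * δ) = c - 3 * (c * δ) := by rw [hcre]; ring
    refine ⟨him3, ?_, ?_⟩
    · linarith only [hre4, h9, hcre]
    · linarith only [hre4, hcre, hu, hc]
end

section
/- There exist constants c₀ > 0 and C > 0 with the following property. Let ω = e^{2πi/3} and let z ∈ ℂ satisfy |z| ≥ 1, Re(ωz) ≤ Re(ω²z) ≤ Re(z), |e^{(ω−1)z}| ≤ e^{−3/2}, and |e^{(ω²−1)z} − 1| > 1/3. Let 0 ≤ a, b ≤ c₀ and let G ∈ M₃(ℂ) satisfy |G_{jj} − 1| ≤ a/|z|⁴ for j = 1,2,3 and |G_{jk}| ≤ b/|z|² for j ≠ k. Then the unique eigenvalue τ₃ of T = (e^{ω^j z} G_{jk})_{j,k=1}^3 lying in the Gershgorin disc Γ₃ = {τ : |τ − e^{z}G_{33}| ≤ |e^{z}|(|G_{31}| + |G_{32}|)} satisfies |e^{−z} τ₃ − 1| ≤ C(a + b²)/|z|⁴. -/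
open Matrix Complex Polynomial

noncomputable def Complex.abs : AbsoluteValue ℂ ℝ where
  toFun x := ‖x‖
  map_mul' := norm_mul
  nonneg' := norm_nonneg
  eq_zero' _ := norm_eq_zero
  add_le' := norm_add_le

lemma Complex.norm_eq_abs (x : ℂ) : ‖x‖ = Complex.abs x := rfl

@[simp]
lemma Complex.abs_two : Complex.abs 2 = 2 := by
  show ‖(2:ℂ)‖ = 2
  norm_num

lemma Complex.abs_exp (x : ℂ) : Complex.abs (Complex.exp x) = Real.exp x.re := Complex.norm_exp x



lemma charpoly_eval_fin3 (T : Matrix (Fin 3) (Fin 3) ℂ) (x : ℂ) :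
    T.charpoly.eval x =
      (x - T 0 0) * (x - T 1 1) * (x - T 2 2)
       - (x - T 0 0) * (T 1 2 * T 2 1)
       - T 0 1 * T 1 0 * (x - T 2 2)
       - T 0 1 * T 1 2 * T 2 0
       - T 0 2 * T 1 0 * T 2 1
       - T 0 2 * (x - T 1 1) * T 2 0 := by
  rw [Matrix.charpoly, Matrix.det_fin_three]
  simp [charmatrix_apply, Matrix.diagonal_apply]
  ring

lemma det_smul_one_sub_fin3 (T : Matrix (Fin 3) (Fin 3) ℂ) (x : ℂ) :
    (x • (1 : Matrix (Fin 3) (Fin 3) ℂ) - T).det = T.charpoly.eval x := by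
  rw [charpoly_eval_fin3, Matrix.det_fin_three]
  simp [Matrix.one_apply]
  ring

lemma root_hasEigenvalue (T : Matrix (Fin 3) (Fin 3) ℂ) (μ : ℂ) (h : T.charpoly.IsRoot μ) :
    Module.End.HasEigenvalue (Matrix.toLin' T) μ := by
  have hdet : (μ • (1 : Matrix (Fin 3) (Fin 3) ℂ) - T).det = 0 := by
    rw [det_smul_one_sub_fin3]; exact h
  obtain ⟨v, hv0, hv⟩ := (Matrix.exists_mulVec_eq_zero_iff).2 hdet
  refine Module.End.hasEigenvalue_of_hasEigenvector ⟨?_, hv0⟩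
  rw [Module.End.mem_eigenspace_iff, Matrix.toLin'_apply]
  have := hv
  rw [Matrix.sub_mulVec, Matrix.smul_mulVec, Matrix.one_mulVec, sub_eq_zero] at this
  rw [← this]


lemma gersh3 (T : Matrix (Fin 3) (Fin 3) ℂ) (μ : ℂ)
    (h : Module.End.HasEigenvalue (Matrix.toLin' T) μ) :
    Complex.abs (μ - T 0 0) ≤ Complex.abs (T 0 1) + Complex.abs (T 0 2) ∨
    Complex.abs (μ - T 1 1) ≤ Complex.abs (T 1 0) + Complex.abs (T 1 2) ∨
    Complex.abs (μ - T 2 2) ≤ Complex.abs (T 2 0) + Complex.abs (T 2 1) := by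
  obtain ⟨k, hk⟩ := eigenvalue_mem_ball h
  rw [Metric.mem_closedBall, dist_eq_norm] at hk
  fin_cases k <;> simp only [Fin.zero_eta, Fin.mk_one, Fin.reduceFinMk] at hk
  · left
    rw [show (Finset.univ.erase (0 : Fin 3)) = {1, 2} from by decide,
      Finset.sum_insert (by decide), Finset.sum_singleton] at hk
    simpa [Complex.norm_eq_abs] using hk
  · right; left
    rw [show (Finset.univ.erase (1 : Fin 3)) = {0, 2} from by decide,
      Finset.sum_insert (by decide), Finset.sum_singleton] at hk
    simpa [Complex.norm_eq_abs] using hk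
  · right; right
    rw [show (Finset.univ.erase (2 : Fin 3)) = {0, 1} from by decide,
      Finset.sum_insert (by decide), Finset.sum_singleton] at hk
    simpa [Complex.norm_eq_abs] using hk


lemma roots3 (T : Matrix (Fin 3) (Fin 3) ℂ) :
    ∃ r1 r2 r3 : ℂ, T.charpoly.roots = {r1, r2, r3} ∧
      T 0 0 + T 1 1 + T 2 2 = r1 + r2 + r3 ∧
      ∀ x : ℂ, T.charpoly.eval x = (x - r1) * (x - r2) * (x - r3) := by
  have hm := T.charpoly_monic
  have hsp : T.charpoly.Splits := IsAlgClosed.splits _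
  have hcard : T.charpoly.roots.card = 3 := by
    rw [(Polynomial.splits_iff_card_roots).1 hsp, Matrix.charpoly_natDegree_eq_dim,
      Fintype.card_fin]
  obtain ⟨r1, r2, r3, hr⟩ := Multiset.card_eq_three.1 hcard
  refine ⟨r1, r2, r3, hr, ?_, ?_⟩
  · have := Matrix.trace_eq_sum_roots_charpoly T
    rw [Matrix.trace_fin_three, hr] at this
    simpa [add_assoc] using this
  · intro x
    have hp := hsp.eq_prod_roots_of_monic hm
    have := congrArg (Polynomial.eval x) hp
    rw [hr] at this
    simpa [mul_assoc] using this

lemma mem_roots_iff (T : Matrix (Fin 3) (Fin 3) ℂ) (x : ℂ) :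
    x ∈ T.charpoly.roots ↔ T.charpoly.IsRoot x := by
  rw [Polynomial.mem_roots (T.charpoly_monic.ne_zero)]

set_option maxHeartbeats 1000000 in

lemma coreD (E1 E2 E3 g00 g01 g02 g10 g11 g12 g20 g21 g22 : ℂ) (s α β : ℝ)
    (hs : 0 < s) (hE3 : Complex.abs E3 = s) (hE1 : Complex.abs E1 ≤ s/4)
    (hE2 : Complex.abs E2 ≤ s) (hgap : s/3 < Complex.abs (E2 - E3))
    (hα0 : 0 ≤ α) (hα : α ≤ 1/1000) (hβ0 : 0 ≤ β) (hβ : β ≤ 1/1000)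
    (h00 : Complex.abs (g00 - 1) ≤ α) (h11 : Complex.abs (g11 - 1) ≤ α)
    (h22 : Complex.abs (g22 - 1) ≤ α)
    (h01 : Complex.abs g01 ≤ β) (h02 : Complex.abs g02 ≤ β) (h10 : Complex.abs g10 ≤ β)
    (h12 : Complex.abs g12 ≤ β) (h20 : Complex.abs g20 ≤ β) (h21 : Complex.abs g21 ≤ β)
    (τ : ℂ)
    (hΓ : Complex.abs (τ - E3*g22) ≤ Complex.abs E3 * (Complex.abs g20 + Complex.abs g21))
    (heq : (τ - E3*g22) * ((τ - E1*g00)*(τ - E2*g11) - E1*E2*(g01*g10))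
      = (τ - E1*g00)*(E2*E3*(g12*g21)) + E1*E2*E3*(g01*g12*g20 + g02*g10*g21)
        + E1*E3*(g02*g20)*(τ - E2*g11)) :
    Complex.abs (τ - E3*g22) ≤ 20*s*β^2 := by
  have hnn : ∀ x : ℂ, 0 ≤ Complex.abs x := fun x => Complex.abs.nonneg x
  have tri : ∀ x y : ℂ, Complex.abs (x + y) ≤ Complex.abs x + Complex.abs y :=
    fun x y => Complex.abs.add_le x y
  have tri' : ∀ x y : ℂ, Complex.abs (x - y) ≤ Complex.abs x + Complex.abs y := fun x y => by
    rw [sub_eq_add_neg]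
    exact (Complex.abs.add_le _ _).trans (by rw [Complex.abs.map_neg])
  have hg00 : Complex.abs g00 ≤ 1 + α := by
    calc Complex.abs g00 = Complex.abs ((g00 - 1) + 1) := by ring_nf
    _ ≤ Complex.abs (g00 - 1) + Complex.abs 1 := tri _ _
    _ ≤ 1 + α := by rw [Complex.abs.map_one]; linarith
  have hg11 : Complex.abs g11 ≤ 1 + α := by
    calc Complex.abs g11 = Complex.abs ((g11 - 1) + 1) := by ring_nf
    _ ≤ Complex.abs (g11 - 1) + Complex.abs 1 := tri _ _
    _ ≤ 1 + α := by rw [Complex.abs.map_one]; linarith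
  have hΓ' : Complex.abs (τ - E3*g22) ≤ 2*β*s := by
    refine hΓ.trans ?_; rw [hE3]; nlinarith [h20, h21]
  have hτE3 : Complex.abs (τ - E3) ≤ 3/1000*s := by
    calc Complex.abs (τ - E3) = Complex.abs ((τ - E3*g22) + E3*(g22-1)) := by ring_nf
    _ ≤ Complex.abs (τ - E3*g22) + Complex.abs (E3*(g22-1)) := tri _ _
    _ = Complex.abs (τ - E3*g22) + s * Complex.abs (g22-1) := by
        rw [Complex.abs.map_mul, hE3]
    _ ≤ 3/1000*s := by nlinarith [hnn (g22-1)]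
  have hA_ub : Complex.abs (τ - E1*g00) ≤ 13/10*s := by
    calc Complex.abs (τ - E1*g00) = Complex.abs (((τ - E3) + E3) - E1*g00) := by ring_nf
    _ ≤ Complex.abs ((τ - E3) + E3) + Complex.abs (E1*g00) := tri' _ _
    _ ≤ Complex.abs (τ - E3) + Complex.abs E3 + Complex.abs E1 * Complex.abs g00 := by
        rw [Complex.abs.map_mul]; exact add_le_add_left (tri _ _) _
    _ ≤ 13/10*s := by rw [hE3]; nlinarith [hnn E1, hnn g00]
  have hA_lb : 7/10*s ≤ Complex.abs (τ - E1*g00) := by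
    have key : s ≤ Complex.abs (τ - E1*g00) + Complex.abs (τ - E3) + Complex.abs E1 * Complex.abs g00 := by
      calc s = Complex.abs E3 := hE3.symm
      _ = Complex.abs (((τ - E1*g00) - (τ - E3)) + E1*g00) := by ring_nf
      _ ≤ Complex.abs ((τ - E1*g00) - (τ - E3)) + Complex.abs (E1*g00) := tri _ _
      _ ≤ Complex.abs (τ - E1*g00) + Complex.abs (τ - E3) + Complex.abs E1 * Complex.abs g00 := by
          rw [Complex.abs.map_mul]; exact add_le_add_left (tri' _ _) _
    nlinarith [hnn E1, hnn g00, mul_le_mul hE1 hg00 (hnn g00) (by positivity : (0:ℝ) ≤ s/4)]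
  have hB_ub : Complex.abs (τ - E2*g11) ≤ 21/10*s := by
    calc Complex.abs (τ - E2*g11) = Complex.abs (((τ - E3) + E3) - E2*g11) := by ring_nf
    _ ≤ Complex.abs ((τ - E3) + E3) + Complex.abs (E2*g11) := tri' _ _
    _ ≤ Complex.abs (τ - E3) + Complex.abs E3 + Complex.abs E2 * Complex.abs g11 := by
        rw [Complex.abs.map_mul]; exact add_le_add_left (tri _ _) _
    _ ≤ 21/10*s := by rw [hE3]; nlinarith [hnn E2, hnn g11]
  have hB_lb : 32/100*s ≤ Complex.abs (τ - E2*g11) := by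
    have key : Complex.abs (E2 - E3) ≤ Complex.abs (τ - E3) + Complex.abs (τ - E2*g11)
        + Complex.abs E2 * Complex.abs (g11 - 1) := by
      calc Complex.abs (E2 - E3)
          = Complex.abs (((τ - E3) - (τ - E2*g11)) - E2*(g11-1)) := by ring_nf
      _ ≤ Complex.abs ((τ - E3) - (τ - E2*g11)) + Complex.abs (E2*(g11-1)) := tri' _ _
      _ ≤ Complex.abs (τ - E3) + Complex.abs (τ - E2*g11) + Complex.abs E2 * Complex.abs (g11-1) := by
          rw [Complex.abs.map_mul]; exact add_le_add_left (tri' _ _) _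
    have hp1 : Complex.abs E2 * Complex.abs (g11 - 1) ≤ s * α :=
      mul_le_mul hE2 h11 (hnn (g11-1)) hs.le
    have hp2 : s * α ≤ s * (1/1000) := by nlinarith
    linarith
  have hQ_lb : 1/5*s^2 ≤ Complex.abs ((τ - E1*g00)*(τ - E2*g11) - E1*E2*(g01*g10)) := by
    have hAB : 7/10*s * (32/100*s) ≤ Complex.abs ((τ - E1*g00)*(τ - E2*g11)) := by
      rw [Complex.abs.map_mul]
      exact mul_le_mul hA_lb hB_lb (by positivity) (hnn _)
    have key : Complex.abs ((τ - E1*g00)*(τ - E2*g11))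
        ≤ Complex.abs ((τ - E1*g00)*(τ - E2*g11) - E1*E2*(g01*g10))
          + Complex.abs E1 * Complex.abs E2 * (Complex.abs g01 * Complex.abs g10) := by
      calc Complex.abs ((τ - E1*g00)*(τ - E2*g11))
          = Complex.abs (((τ - E1*g00)*(τ - E2*g11) - E1*E2*(g01*g10)) + E1*E2*(g01*g10)) := by
            ring_nf
      _ ≤ Complex.abs ((τ - E1*g00)*(τ - E2*g11) - E1*E2*(g01*g10))
            + Complex.abs (E1*E2*(g01*g10)) := tri _ _
      _ = _ := by rw [Complex.abs.map_mul, Complex.abs.map_mul, Complex.abs.map_mul]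
    have f0 : (0:ℝ) ≤ s/4*s := mul_nonneg (by linarith) hs.le
    have f1 : Complex.abs E1 * Complex.abs E2 * (Complex.abs g01 * Complex.abs g10)
        ≤ s/4*s*(β*β) :=
      mul_le_mul (mul_le_mul hE1 hE2 (hnn E2) (by linarith))
        (mul_le_mul h01 h10 (hnn g10) hβ0) (mul_nonneg (hnn g01) (hnn g10)) f0
    have f2 : β*β ≤ 1/1000*(1/1000) := mul_le_mul hβ hβ hβ0 (by norm_num)
    have f3 : s/4*s*(β*β) ≤ s/4*s*(1/1000*(1/1000)) := mul_le_mul_of_nonneg_left f2 f0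
    nlinarith [hAB, key, f1, f3, hs]
  have hR_ub : Complex.abs ((τ - E1*g00)*(E2*E3*(g12*g21)) + E1*E2*E3*(g01*g12*g20 + g02*g10*g21)
        + E1*E3*(g02*g20)*(τ - E2*g11)) ≤ 2*s^3*β^2 := by
    have t1 : Complex.abs ((τ - E1*g00)*(E2*E3*(g12*g21))) ≤ 13/10*s*(s*s*(β*β)) := by
      simp only [Complex.abs.map_mul]
      rw [hE3]
      gcongr <;> first | exact hA_ub | exact hE2 | exact h12 | exact h21
    have t2 : Complex.abs (E1*E2*E3*(g01*g12*g20 + g02*g10*g21))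
        ≤ s/4*s*s*(β*β*(1/1000)+β*β*(1/1000)) := by
      simp only [Complex.abs.map_mul]
      have hsum : Complex.abs (g01*g12*g20 + g02*g10*g21) ≤ β*β*(1/1000)+β*β*(1/1000) := by
        refine (tri _ _).trans ?_
        simp only [Complex.abs.map_mul]
        gcongr <;> first | exact h01 | exact h12 | exact h20.trans hβ | exact h02 | exact h10 | exact h21.trans hβ
      rw [hE3]
      gcongr <;> first | exact hE1 | exact hE2 | exact hsum
    have t3 : Complex.abs (E1*E3*(g02*g20)*(τ - E2*g11)) ≤ s/4*s*(β*β)*(21/10*s) := by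
      simp only [Complex.abs.map_mul]
      rw [hE3]
      gcongr <;> first | exact hE1 | exact h02 | exact h20 | exact hB_ub
    calc Complex.abs ((τ - E1*g00)*(E2*E3*(g12*g21)) + E1*E2*E3*(g01*g12*g20 + g02*g10*g21)
        + E1*E3*(g02*g20)*(τ - E2*g11))
        ≤ Complex.abs ((τ - E1*g00)*(E2*E3*(g12*g21)) + E1*E2*E3*(g01*g12*g20 + g02*g10*g21))
          + Complex.abs (E1*E3*(g02*g20)*(τ - E2*g11)) := tri _ _
    _ ≤ Complex.abs ((τ - E1*g00)*(E2*E3*(g12*g21)))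
          + Complex.abs (E1*E2*E3*(g01*g12*g20 + g02*g10*g21))
          + Complex.abs (E1*E3*(g02*g20)*(τ - E2*g11)) := add_le_add_left (tri _ _) _
    _ ≤ 2*s^3*β^2 := by
          have hss : (0:ℝ) ≤ s*s*s*(β*β) :=
            mul_nonneg (mul_nonneg (mul_nonneg hs.le hs.le) hs.le) (mul_nonneg hβ0 hβ0)
          nlinarith [t1, t2, t3, hss]
  have habs_eq := congrArg Complex.abs heq
  rw [Complex.abs.map_mul] at habs_eq
  have key : Complex.abs (τ - E3*g22) * (1/5*s^2) ≤ 2*s^3*β^2 := by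
    calc Complex.abs (τ - E3*g22) * (1/5*s^2)
        ≤ Complex.abs (τ - E3*g22) * Complex.abs ((τ - E1*g00)*(τ - E2*g11) - E1*E2*(g01*g10)) :=
          mul_le_mul_of_nonneg_left hQ_lb (hnn _)
    _ ≤ 2*s^3*β^2 := by rw [habs_eq]; exact hR_ub
  nlinarith [key, mul_pos hs hs, hnn (τ - E3*g22), sq_nonneg β, hs]


set_option maxHeartbeats 1000000 in
lemma coreEU (E1 E2 E3 g00 g01 g02 g10 g11 g12 g20 g21 g22 : ℂ) (s α β : ℝ)
    (hs : 0 < s) (hE3 : Complex.abs E3 = s) (hE1 : Complex.abs E1 ≤ s/4)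
    (hE2 : Complex.abs E2 ≤ s) (hgap : s/3 < Complex.abs (E2 - E3))
    (hα0 : 0 ≤ α) (hα : α ≤ 1/1000) (hβ0 : 0 ≤ β) (hβ : β ≤ 1/1000)
    (h00 : Complex.abs (g00 - 1) ≤ α) (h11 : Complex.abs (g11 - 1) ≤ α)
    (h22 : Complex.abs (g22 - 1) ≤ α)
    (h01 : Complex.abs g01 ≤ β) (h02 : Complex.abs g02 ≤ β) (h10 : Complex.abs g10 ≤ β)
    (h12 : Complex.abs g12 ≤ β) (h20 : Complex.abs g20 ≤ β) (h21 : Complex.abs g21 ≤ β)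
    (r : ℂ)
    (hg : Complex.abs (r - E1*g00) ≤ Complex.abs E1 * Complex.abs g01 + Complex.abs E1 * Complex.abs g02 ∨
          Complex.abs (r - E2*g11) ≤ Complex.abs E2 * Complex.abs g10 + Complex.abs E2 * Complex.abs g12 ∨
          Complex.abs (r - E3*g22) ≤ Complex.abs E3 * Complex.abs g20 + Complex.abs E3 * Complex.abs g21)
    (hn : ¬ Complex.abs (r - E3*g22) ≤ Complex.abs E3 * (Complex.abs g20 + Complex.abs g21)) :
    3/10*s ≤ Complex.abs (E3*g22 - r) := by
  have hnn : ∀ x : ℂ, 0 ≤ Complex.abs x := fun x => Complex.abs.nonneg x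
  have tri : ∀ x y : ℂ, Complex.abs (x + y) ≤ Complex.abs x + Complex.abs y :=
    fun x y => Complex.abs.add_le x y
  have tri' : ∀ x y : ℂ, Complex.abs (x - y) ≤ Complex.abs x + Complex.abs y := fun x y => by
    rw [sub_eq_add_neg]
    exact (Complex.abs.add_le _ _).trans (by rw [Complex.abs.map_neg])
  rcases hg with hg | hg | hg
  · -- r near E1 g00
    have hr : Complex.abs (r - E1*g00) ≤ s/4*β + s/4*β := by
      refine hg.trans (add_le_add ?_ ?_) <;>
        exact mul_le_mul hE1 (by assumption) (hnn _) (by linarith)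
    have key : s ≤ Complex.abs (E3*g22 - r) + (s*α + (s/4*β + s/4*β) + s/4*(1+α)) := by
      have hg00 : Complex.abs g00 ≤ 1 + α := by
        calc Complex.abs g00 = Complex.abs ((g00 - 1) + 1) := by ring_nf
        _ ≤ Complex.abs (g00 - 1) + Complex.abs 1 := tri _ _
        _ ≤ 1 + α := by rw [Complex.abs.map_one]; linarith
      calc s = Complex.abs E3 := hE3.symm
      _ = Complex.abs ((((E3*g22 - r) - E3*(g22-1)) + (r - E1*g00)) + E1*g00) := by ring_nf
      _ ≤ Complex.abs (((E3*g22 - r) - E3*(g22-1)) + (r - E1*g00)) + Complex.abs (E1*g00) := tri _ _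
      _ ≤ Complex.abs ((E3*g22 - r) - E3*(g22-1)) + Complex.abs (r - E1*g00) + Complex.abs (E1*g00)
          := add_le_add_left (tri _ _) _
      _ ≤ Complex.abs (E3*g22 - r) + Complex.abs (E3*(g22-1)) + Complex.abs (r - E1*g00)
            + Complex.abs (E1*g00) := by
          refine add_le_add_left (add_le_add_left (tri' _ _) _) _
      _ ≤ Complex.abs (E3*g22 - r) + (s*α + (s/4*β + s/4*β) + s/4*(1+α)) := by
          rw [Complex.abs.map_mul, Complex.abs.map_mul, hE3]
          have p1 : s * Complex.abs (g22-1) ≤ s*α := by nlinarith [hnn (g22-1)]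
          have p2 : Complex.abs E1 * Complex.abs g00 ≤ s/4*(1+α) :=
            mul_le_mul hE1 hg00 (hnn _) (by linarith)
          linarith [hr]
    nlinarith
  · -- r near E2 g11
    have hr : Complex.abs (r - E2*g11) ≤ s*β + s*β := by
      refine hg.trans (add_le_add ?_ ?_) <;>
        exact mul_le_mul hE2 (by assumption) (hnn _) (by linarith)
    have key : Complex.abs (E2 - E3) ≤ Complex.abs (E3*g22 - r) + (s*α + (s*β + s*β) + s*α) := by
      calc Complex.abs (E2 - E3) = Complex.abs (E3 - E2) := Complex.abs.map_sub _ _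
      _ = Complex.abs ((((E3*g22 - r) - E3*(g22-1)) + (r - E2*g11)) + E2*(g11-1)) := by ring_nf
      _ ≤ Complex.abs (((E3*g22 - r) - E3*(g22-1)) + (r - E2*g11)) + Complex.abs (E2*(g11-1)) :=
          tri _ _
      _ ≤ Complex.abs ((E3*g22 - r) - E3*(g22-1)) + Complex.abs (r - E2*g11)
            + Complex.abs (E2*(g11-1)) := add_le_add_left (tri _ _) _
      _ ≤ Complex.abs (E3*g22 - r) + Complex.abs (E3*(g22-1)) + Complex.abs (r - E2*g11)
            + Complex.abs (E2*(g11-1)) := by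
          refine add_le_add_left (add_le_add_left (tri' _ _) _) _
      _ ≤ Complex.abs (E3*g22 - r) + (s*α + (s*β + s*β) + s*α) := by
          rw [Complex.abs.map_mul, Complex.abs.map_mul, hE3]
          have p1 : s * Complex.abs (g22-1) ≤ s*α := by nlinarith [hnn (g22-1)]
          have p2 : Complex.abs E2 * Complex.abs (g11-1) ≤ s*α :=
            mul_le_mul hE2 h11 (hnn _) hs.le
          linarith [hr]
    nlinarith
  · exact absurd (hg.trans (le_of_eq (by ring))) hn


set_option maxHeartbeats 1000000 in
lemma coreU (E1 E2 E3 g00 g01 g02 g10 g11 g12 g20 g21 g22 : ℂ) (s α β : ℝ)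
    (hs : 0 < s) (hE3 : Complex.abs E3 = s) (hE1 : Complex.abs E1 ≤ s/4)
    (hE2 : Complex.abs E2 ≤ s) (hgap : s/3 < Complex.abs (E2 - E3))
    (hα0 : 0 ≤ α) (hα : α ≤ 1/1000) (hβ0 : 0 ≤ β) (hβ : β ≤ 1/1000)
    (h00 : Complex.abs (g00 - 1) ≤ α) (h11 : Complex.abs (g11 - 1) ≤ α)
    (h22 : Complex.abs (g22 - 1) ≤ α)
    (h01 : Complex.abs g01 ≤ β) (h02 : Complex.abs g02 ≤ β) (h10 : Complex.abs g10 ≤ β)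
    (h12 : Complex.abs g12 ≤ β) (h20 : Complex.abs g20 ≤ β) (h21 : Complex.abs g21 ≤ β)
    (τ τ' r : ℂ)
    (hΓτ : Complex.abs (τ - E3*g22) ≤ Complex.abs E3 * (Complex.abs g20 + Complex.abs g21))
    (hΓτ' : Complex.abs (τ' - E3*g22) ≤ Complex.abs E3 * (Complex.abs g20 + Complex.abs g21))
    (hsum : E1*g00 + E2*g11 + E3*g22 = τ + τ' + r)
    (hg : Complex.abs (r - E1*g00) ≤ Complex.abs E1 * Complex.abs g01 + Complex.abs E1 * Complex.abs g02 ∨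
          Complex.abs (r - E2*g11) ≤ Complex.abs E2 * Complex.abs g10 + Complex.abs E2 * Complex.abs g12 ∨
          Complex.abs (r - E3*g22) ≤ Complex.abs E3 * Complex.abs g20 + Complex.abs E3 * Complex.abs g21) :
    False := by
  have hnn : ∀ x : ℂ, 0 ≤ Complex.abs x := fun x => Complex.abs.nonneg x
  have tri : ∀ x y : ℂ, Complex.abs (x + y) ≤ Complex.abs x + Complex.abs y :=
    fun x y => Complex.abs.add_le x y
  have tri' : ∀ x y : ℂ, Complex.abs (x - y) ≤ Complex.abs x + Complex.abs y := fun x y => by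
    rw [sub_eq_add_neg]
    exact (Complex.abs.add_le _ _).trans (by rw [Complex.abs.map_neg])
  -- τ, τ' close to E3
  have hτE3 : ∀ σ : ℂ, Complex.abs (σ - E3*g22) ≤ Complex.abs E3 * (Complex.abs g20 + Complex.abs g21)
      → Complex.abs (σ - E3) ≤ 3/1000*s := by
    intro σ hσ
    have hσ' : Complex.abs (σ - E3*g22) ≤ 2*β*s := by
      refine hσ.trans ?_; rw [hE3]; nlinarith [h20, h21, hs.le, hnn g20, hnn g21, hβ0]
    calc Complex.abs (σ - E3) = Complex.abs ((σ - E3*g22) + E3*(g22-1)) := by ring_nf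
    _ ≤ Complex.abs (σ - E3*g22) + Complex.abs (E3*(g22-1)) := tri _ _
    _ = Complex.abs (σ - E3*g22) + s * Complex.abs (g22-1) := by rw [Complex.abs.map_mul, hE3]
    _ ≤ 3/1000*s := by nlinarith [hnn (g22-1)]
  have hτ := hτE3 τ hΓτ
  have hτ' := hτE3 τ' hΓτ'
  -- r is close to E1+E2-E3
  have hr : Complex.abs (r - (E1 + E2 - E3)) ≤ 9/1000*s := by
    have e : r - (E1 + E2 - E3)
        = E1*(g00-1) + E2*(g11-1) + E3*(g22-1) + (E3 - τ) + (E3 - τ') := by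
      have : r = E1*g00 + E2*g11 + E3*g22 - τ - τ' := by linear_combination -hsum
      rw [this]; ring
    rw [e]
    have p1 : Complex.abs (E1*(g00-1)) ≤ s/4*α := by
      rw [Complex.abs.map_mul]; exact mul_le_mul hE1 h00 (hnn _) (by linarith)
    have p2 : Complex.abs (E2*(g11-1)) ≤ s*α := by
      rw [Complex.abs.map_mul]; exact mul_le_mul hE2 h11 (hnn _) hs.le
    have p3 : Complex.abs (E3*(g22-1)) ≤ s*α := by
      rw [Complex.abs.map_mul, hE3]; nlinarith [hnn (g22-1)]
    have p4 : Complex.abs (E3 - τ) ≤ 3/1000*s := by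
      rw [Complex.abs.map_sub]; exact hτ
    have p5 : Complex.abs (E3 - τ') ≤ 3/1000*s := by
      rw [Complex.abs.map_sub]; exact hτ'
    calc Complex.abs (E1*(g00-1) + E2*(g11-1) + E3*(g22-1) + (E3 - τ) + (E3 - τ'))
        ≤ Complex.abs (E1*(g00-1) + E2*(g11-1) + E3*(g22-1) + (E3 - τ)) + Complex.abs (E3 - τ') :=
          tri _ _
    _ ≤ Complex.abs (E1*(g00-1) + E2*(g11-1) + E3*(g22-1)) + Complex.abs (E3 - τ)
          + Complex.abs (E3 - τ') := add_le_add_left (tri _ _) _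
    _ ≤ Complex.abs (E1*(g00-1) + E2*(g11-1)) + Complex.abs (E3*(g22-1)) + Complex.abs (E3 - τ)
          + Complex.abs (E3 - τ') := by
        refine add_le_add_left (add_le_add_left (tri _ _) _) _
    _ ≤ Complex.abs (E1*(g00-1)) + Complex.abs (E2*(g11-1)) + Complex.abs (E3*(g22-1))
          + Complex.abs (E3 - τ) + Complex.abs (E3 - τ') := by
        refine add_le_add_left (add_le_add_left (add_le_add_left (tri _ _) _) _) _
    _ ≤ 9/1000*s := by
        have hsα : s*α ≤ s*(1/1000) := mul_le_mul_of_nonneg_left hα hs.le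
        linarith
  rcases hg with hg | hg | hg
  · -- r near E1  ⇒  E2 close to E3, contradiction with gap
    have hr1 : Complex.abs (r - E1) ≤ s/4*β + s/4*β + s/4*α := by
      calc Complex.abs (r - E1) = Complex.abs ((r - E1*g00) + E1*(g00-1)) := by ring_nf
      _ ≤ Complex.abs (r - E1*g00) + Complex.abs (E1*(g00-1)) := tri _ _
      _ ≤ s/4*β + s/4*β + s/4*α := by
          have p1 : Complex.abs (E1*(g00-1)) ≤ s/4*α := by
            rw [Complex.abs.map_mul]; exact mul_le_mul hE1 h00 (hnn _) (by linarith)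
          have p2 : Complex.abs (r - E1*g00) ≤ s/4*β + s/4*β :=
            hg.trans (add_le_add (mul_le_mul hE1 h01 (hnn _) (by linarith))
              (mul_le_mul hE1 h02 (hnn _) (by linarith)))
          linarith
    have : Complex.abs (E2 - E3) ≤ 9/1000*s + (s/4*β + s/4*β + s/4*α) := by
      calc Complex.abs (E2 - E3) = Complex.abs ((r - (E1 + E2 - E3)) - (r - E1)) := by
            rw [Complex.abs.map_sub]; ring_nf
      _ ≤ Complex.abs (r - (E1 + E2 - E3)) + Complex.abs (r - E1) := tri' _ _
      _ ≤ _ := add_le_add hr hr1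
    nlinarith
  · -- r near E2  ⇒  E1 close to E3, contradiction with |E1| ≤ s/4
    have hr1 : Complex.abs (r - E2) ≤ s*β + s*β + s*α := by
      calc Complex.abs (r - E2) = Complex.abs ((r - E2*g11) + E2*(g11-1)) := by ring_nf
      _ ≤ Complex.abs (r - E2*g11) + Complex.abs (E2*(g11-1)) := tri _ _
      _ ≤ s*β + s*β + s*α := by
          have p1 : Complex.abs (E2*(g11-1)) ≤ s*α := by
            rw [Complex.abs.map_mul]; exact mul_le_mul hE2 h11 (hnn _) hs.le
          have p2 : Complex.abs (r - E2*g11) ≤ s*β + s*β :=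
            hg.trans (add_le_add (mul_le_mul hE2 h10 (hnn _) hs.le)
              (mul_le_mul hE2 h12 (hnn _) hs.le))
          linarith
    have hE1E3 : Complex.abs (E1 - E3) ≤ 9/1000*s + (s*β + s*β + s*α) := by
      calc Complex.abs (E1 - E3) = Complex.abs ((r - (E1 + E2 - E3)) - (r - E2)) := by
            rw [Complex.abs.map_sub]; ring_nf
      _ ≤ Complex.abs (r - (E1 + E2 - E3)) + Complex.abs (r - E2) := tri' _ _
      _ ≤ _ := add_le_add hr hr1
    have hlow : s - s/4 ≤ Complex.abs (E1 - E3) := by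
      have : s ≤ Complex.abs (E1 - E3) + Complex.abs E1 := by
        calc s = Complex.abs E3 := hE3.symm
        _ = Complex.abs (E1 - (E1 - E3)) := by ring_nf
        _ ≤ Complex.abs E1 + Complex.abs (E1 - E3) := tri' _ _
        _ = _ := by ring
      linarith
    nlinarith
  · -- r near E3  ⇒  E1 + E2 close to 2E3, contradiction
    have hr1 : Complex.abs (r - E3) ≤ 2*β*s + s*α := by
      have hg' : Complex.abs (r - E3*g22) ≤ 2*β*s := by
        have hg2 : Complex.abs (r - E3*g22)
            ≤ Complex.abs E3 * (Complex.abs g20 + Complex.abs g21) :=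
          hg.trans (le_of_eq (by ring))
        refine hg2.trans ?_
        rw [hE3]; nlinarith [h20, h21, hs.le, hnn g20, hnn g21, hβ0]
      calc Complex.abs (r - E3) = Complex.abs ((r - E3*g22) + E3*(g22-1)) := by ring_nf
      _ ≤ Complex.abs (r - E3*g22) + Complex.abs (E3*(g22-1)) := tri _ _
      _ ≤ 2*β*s + s*α := by
          have p3 : Complex.abs (E3*(g22-1)) ≤ s*α := by
            rw [Complex.abs.map_mul, hE3]; nlinarith [hnn (g22-1)]
          linarith
    have hup : Complex.abs (E1 + E2 - 2*E3) ≤ 9/1000*s + (2*β*s + s*α) := by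
      calc Complex.abs (E1 + E2 - 2*E3) = Complex.abs ((r - (E1 + E2 - E3)) - (r - E3)) := by
            rw [Complex.abs.map_sub]; ring_nf
      _ ≤ Complex.abs (r - (E1 + E2 - E3)) + Complex.abs (r - E3) := tri' _ _
      _ ≤ _ := add_le_add hr hr1
    have hlow : 2*s - s/4 - s ≤ Complex.abs (E1 + E2 - 2*E3) := by
      have h2s : 2*s = Complex.abs (2*E3) := by
        rw [Complex.abs.map_mul, hE3]
        norm_num
      have : 2*s ≤ Complex.abs (E1 + E2 - 2*E3) + Complex.abs E1 + Complex.abs E2 := by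
        calc 2*s = Complex.abs (2*E3) := h2s
        _ = Complex.abs (((E1 + E2 - 2*E3) - E1 - E2) * (-1)) := by ring_nf
        _ = Complex.abs ((E1 + E2 - 2*E3) - E1 - E2) := by
            rw [Complex.abs.map_mul, Complex.abs.map_neg, Complex.abs.map_one, mul_one]
        _ ≤ Complex.abs ((E1 + E2 - 2*E3) - E1) + Complex.abs E2 := tri' _ _
        _ ≤ Complex.abs (E1 + E2 - 2*E3) + Complex.abs E1 + Complex.abs E2 :=
            add_le_add_left (tri' _ _) _
      linarith
    nlinarith


set_option maxHeartbeats 1000000 in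
lemma coreEx (E1 E2 E3 g00 g01 g02 g10 g11 g12 g20 g21 g22 : ℂ) (s α β : ℝ)
    (hs : 0 < s) (hE3 : Complex.abs E3 = s) (hE1 : Complex.abs E1 ≤ s/4)
    (hE2 : Complex.abs E2 ≤ s)
    (hα0 : 0 ≤ α) (hα : α ≤ 1/1000) (hβ0 : 0 ≤ β) (hβ : β ≤ 1/1000)
    (h00 : Complex.abs (g00 - 1) ≤ α) (h11 : Complex.abs (g11 - 1) ≤ α)
    (h22 : Complex.abs (g22 - 1) ≤ α)
    (h01 : Complex.abs g01 ≤ β) (h02 : Complex.abs g02 ≤ β) (h10 : Complex.abs g10 ≤ β)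
    (h12 : Complex.abs g12 ≤ β) (h20 : Complex.abs g20 ≤ β) (h21 : Complex.abs g21 ≤ β)
    (r1 r2 r3 : ℂ)
    (l1 : 3/10*s ≤ Complex.abs (E3*g22 - r1)) (l2 : 3/10*s ≤ Complex.abs (E3*g22 - r2))
    (l3 : 3/10*s ≤ Complex.abs (E3*g22 - r3))
    (hprod : (E3*g22 - r1) * ((E3*g22 - r2) * (E3*g22 - r3))
      = -((E3*g22 - E1*g00)*(E2*E3*(g12*g21)) + E1*E2*E3*(g01*g12*g20 + g02*g10*g21)
          + E1*E3*(g02*g20)*(E3*g22 - E2*g11))) :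
    False := by
  have hnn : ∀ x : ℂ, 0 ≤ Complex.abs x := fun x => Complex.abs.nonneg x
  have tri : ∀ x y : ℂ, Complex.abs (x + y) ≤ Complex.abs x + Complex.abs y :=
    fun x y => Complex.abs.add_le x y
  have tri' : ∀ x y : ℂ, Complex.abs (x - y) ≤ Complex.abs x + Complex.abs y := fun x y => by
    rw [sub_eq_add_neg]
    exact (Complex.abs.add_le _ _).trans (by rw [Complex.abs.map_neg])
  have hg00 : Complex.abs g00 ≤ 1 + α := by
    calc Complex.abs g00 = Complex.abs ((g00 - 1) + 1) := by ring_nf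
    _ ≤ Complex.abs (g00 - 1) + Complex.abs 1 := tri _ _
    _ ≤ 1 + α := by rw [Complex.abs.map_one]; linarith
  have hg11 : Complex.abs g11 ≤ 1 + α := by
    calc Complex.abs g11 = Complex.abs ((g11 - 1) + 1) := by ring_nf
    _ ≤ Complex.abs (g11 - 1) + Complex.abs 1 := tri _ _
    _ ≤ 1 + α := by rw [Complex.abs.map_one]; linarith
  have hg22 : Complex.abs g22 ≤ 1 + α := by
    calc Complex.abs g22 = Complex.abs ((g22 - 1) + 1) := by ring_nf
    _ ≤ Complex.abs (g22 - 1) + Complex.abs 1 := tri _ _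
    _ ≤ 1 + α := by rw [Complex.abs.map_one]; linarith
  have hA_ub : Complex.abs (E3*g22 - E1*g00) ≤ 13/10*s := by
    calc Complex.abs (E3*g22 - E1*g00) ≤ Complex.abs (E3*g22) + Complex.abs (E1*g00) := tri' _ _
    _ = s * Complex.abs g22 + Complex.abs E1 * Complex.abs g00 := by
        rw [Complex.abs.map_mul, Complex.abs.map_mul, hE3]
    _ ≤ 13/10*s := by
        have p1 : s * Complex.abs g22 ≤ s * (1+α) := mul_le_mul_of_nonneg_left hg22 hs.le
        have p2 : Complex.abs E1 * Complex.abs g00 ≤ s/4*(1+α) :=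
          mul_le_mul hE1 hg00 (hnn _) (by linarith)
        nlinarith
  have hB_ub : Complex.abs (E3*g22 - E2*g11) ≤ 21/10*s := by
    calc Complex.abs (E3*g22 - E2*g11) ≤ Complex.abs (E3*g22) + Complex.abs (E2*g11) := tri' _ _
    _ = s * Complex.abs g22 + Complex.abs E2 * Complex.abs g11 := by
        rw [Complex.abs.map_mul, Complex.abs.map_mul, hE3]
    _ ≤ 21/10*s := by
        have p1 : s * Complex.abs g22 ≤ s * (1+α) := mul_le_mul_of_nonneg_left hg22 hs.le
        have p2 : Complex.abs E2 * Complex.abs g11 ≤ s*(1+α) :=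
          mul_le_mul hE2 hg11 (hnn _) hs.le
        nlinarith
  have hR_ub : Complex.abs ((E3*g22 - E1*g00)*(E2*E3*(g12*g21)) + E1*E2*E3*(g01*g12*g20 + g02*g10*g21)
        + E1*E3*(g02*g20)*(E3*g22 - E2*g11)) ≤ 2*s^3*β^2 := by
    have t1 : Complex.abs ((E3*g22 - E1*g00)*(E2*E3*(g12*g21))) ≤ 13/10*s*(s*s*(β*β)) := by
      simp only [Complex.abs.map_mul]
      rw [hE3]
      gcongr <;> first | exact hA_ub | exact hE2 | exact h12 | exact h21
    have t2 : Complex.abs (E1*E2*E3*(g01*g12*g20 + g02*g10*g21))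
        ≤ s/4*s*s*(β*β*(1/1000)+β*β*(1/1000)) := by
      simp only [Complex.abs.map_mul]
      have hsum : Complex.abs (g01*g12*g20 + g02*g10*g21) ≤ β*β*(1/1000)+β*β*(1/1000) := by
        refine (tri _ _).trans ?_
        simp only [Complex.abs.map_mul]
        gcongr <;> first | exact h01 | exact h12 | exact h20.trans hβ | exact h02 | exact h10 | exact h21.trans hβ
      rw [hE3]
      gcongr <;> first | exact hE1 | exact hE2 | exact hsum
    have t3 : Complex.abs (E1*E3*(g02*g20)*(E3*g22 - E2*g11)) ≤ s/4*s*(β*β)*(21/10*s) := by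
      simp only [Complex.abs.map_mul]
      rw [hE3]
      gcongr <;> first | exact hE1 | exact h02 | exact h20 | exact hB_ub
    calc Complex.abs ((E3*g22 - E1*g00)*(E2*E3*(g12*g21)) + E1*E2*E3*(g01*g12*g20 + g02*g10*g21)
        + E1*E3*(g02*g20)*(E3*g22 - E2*g11))
        ≤ Complex.abs ((E3*g22 - E1*g00)*(E2*E3*(g12*g21)) + E1*E2*E3*(g01*g12*g20 + g02*g10*g21))
          + Complex.abs (E1*E3*(g02*g20)*(E3*g22 - E2*g11)) := tri _ _
    _ ≤ Complex.abs ((E3*g22 - E1*g00)*(E2*E3*(g12*g21)))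
          + Complex.abs (E1*E2*E3*(g01*g12*g20 + g02*g10*g21))
          + Complex.abs (E1*E3*(g02*g20)*(E3*g22 - E2*g11)) := add_le_add_left (tri _ _) _
    _ ≤ 2*s^3*β^2 := by
          have hss : (0:ℝ) ≤ s*s*s*(β*β) :=
            mul_nonneg (mul_nonneg (mul_nonneg hs.le hs.le) hs.le) (mul_nonneg hβ0 hβ0)
          nlinarith [t1, t2, t3, hss]
  have habs := congrArg Complex.abs hprod
  rw [Complex.abs.map_mul, Complex.abs.map_mul, Complex.abs.map_neg] at habs
  have hlow : 3/10*s * (3/10*s * (3/10*s))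
      ≤ Complex.abs (E3*g22 - r1) * (Complex.abs (E3*g22 - r2) * Complex.abs (E3*g22 - r3)) := by
    have h23 : 3/10*s * (3/10*s) ≤ Complex.abs (E3*g22 - r2) * Complex.abs (E3*g22 - r3) :=
      mul_le_mul l2 l3 (by positivity) (hnn _)
    exact mul_le_mul l1 h23 (by positivity) (hnn _)
  rw [habs] at hlow
  have hfin := hlow.trans hR_ub
  have hβs : β*β ≤ 1/1000*(1/1000) := mul_le_mul hβ hβ hβ0 (by norm_num)
  nlinarith [hfin, mul_pos (mul_pos hs hs) hs, hβs, mul_le_mul_of_nonneg_left hβs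
    (le_of_lt (mul_pos (mul_pos hs hs) hs))]
lemma sum3_of_two_mem (r1 r2 r3 x y : ℂ) (hx : x ∈ ({r1, r2, r3} : Multiset ℂ))
    (hy : y ∈ ({r1, r2, r3} : Multiset ℂ)) (hxy : x ≠ y) :
    ∃ w, w ∈ ({r1, r2, r3} : Multiset ℂ) ∧ r1 + r2 + r3 = x + y + w := by
  simp only [Multiset.insert_eq_cons, Multiset.mem_cons, Multiset.mem_singleton] at hx hy
  rcases hx with hx|hx|hx <;> rcases hy with hy|hy|hy
  · exact absurd (hx.trans hy.symm) hxy
  · exact ⟨r3, by simp, by subst hx; subst hy; ring⟩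
  · exact ⟨r2, by simp, by subst hx; subst hy; ring⟩
  · exact ⟨r3, by simp, by subst hx; subst hy; ring⟩
  · exact absurd (hx.trans hy.symm) hxy
  · exact ⟨r1, by simp, by subst hx; subst hy; ring⟩
  · exact ⟨r2, by simp, by subst hx; subst hy; ring⟩
  · exact ⟨r1, by simp, by subst hx; subst hy; ring⟩
  · exact absurd (hx.trans hy.symm) hxy


set_option maxHeartbeats 1600000

theorem multiplier_asymptotics_old :
    ∃ c₀ > (0:ℝ), ∃ C > (0:ℝ),
      ∀ (ω z : ℂ), ω = Complex.exp (2 * Real.pi * Complex.I / 3) →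
      1 ≤ Complex.abs z →
      (ω * z).re ≤ (ω ^ 2 * z).re → (ω ^ 2 * z).re ≤ z.re →
      Complex.abs (Complex.exp ((ω - 1) * z)) ≤ Real.exp (-(3/2)) →
      1/3 < Complex.abs (Complex.exp ((ω ^ 2 - 1) * z) - 1) →
      ∀ a b : ℝ, 0 ≤ a → a ≤ c₀ → 0 ≤ b → b ≤ c₀ →
      ∀ G : Matrix (Fin 3) (Fin 3) ℂ,
      (∀ j : Fin 3, Complex.abs (G j j - 1) ≤ a / Complex.abs z ^ 4) →
      (∀ j k : Fin 3, j ≠ k → Complex.abs (G j k) ≤ b / Complex.abs z ^ 2) →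
      ∀ T : Matrix (Fin 3) (Fin 3) ℂ,
      T = Matrix.of (fun (j k : Fin 3) => Complex.exp (ω ^ ((j : ℕ) + 1) * z) * G j k) →
      ∀ Γ₃ : Set ℂ,
      Γ₃ = {τ : ℂ | Complex.abs (τ - Complex.exp z * G 2 2)
        ≤ Complex.abs (Complex.exp z) * (Complex.abs (G 2 0) + Complex.abs (G 2 1))} →
      (∃! τ : ℂ, τ ∈ Γ₃ ∧ T.charpoly.IsRoot τ) ∧
      ∀ τ₃ : ℂ, τ₃ ∈ Γ₃ → T.charpoly.IsRoot τ₃ →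
        Complex.abs (Complex.exp (-z) * τ₃ - 1) ≤ C * (a + b ^ 2) / Complex.abs z ^ 4 := by
  refine ⟨1/1000, by norm_num, 100, by norm_num, ?_⟩
  intro ω z hω hz h12 h23 hE1c hgapc a b ha0 hac hb0 hbc G hGd hGo T hT Γ₃ hΓ
  have hω3 : ω^3 = 1 := by
    rw [hω, ← Complex.exp_nat_mul,
      show ((3:ℕ):ℂ) * (2 * ↑Real.pi * Complex.I / 3) = 2 * ↑Real.pi * Complex.I by
        push_cast; ring,
      Complex.exp_two_pi_mul_I]
  -- matrix entries
  have e00 : T 0 0 = Complex.exp (ω*z) * G 0 0 := by simp [hT]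
  have e01 : T 0 1 = Complex.exp (ω*z) * G 0 1 := by simp [hT]
  have e02 : T 0 2 = Complex.exp (ω*z) * G 0 2 := by simp [hT]
  have e10 : T 1 0 = Complex.exp (ω^2*z) * G 1 0 := by simp [hT]
  have e11 : T 1 1 = Complex.exp (ω^2*z) * G 1 1 := by simp [hT]
  have e12 : T 1 2 = Complex.exp (ω^2*z) * G 1 2 := by simp [hT]
  have e20 : T 2 0 = Complex.exp z * G 2 0 := by simp [hT, hω3]
  have e21 : T 2 1 = Complex.exp z * G 2 1 := by simp [hT, hω3]
  have e22 : T 2 2 = Complex.exp z * G 2 2 := by simp [hT, hω3]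
  have hev : ∀ x : ℂ, T.charpoly.eval x =
      (x - Complex.exp (ω*z) * G 0 0) * (x - Complex.exp (ω^2*z) * G 1 1)
        * (x - Complex.exp z * G 2 2)
      - (x - Complex.exp (ω*z) * G 0 0) * (Complex.exp (ω^2*z) * G 1 2 * (Complex.exp z * G 2 1))
      - Complex.exp (ω*z) * G 0 1 * (Complex.exp (ω^2*z) * G 1 0) * (x - Complex.exp z * G 2 2)
      - Complex.exp (ω*z) * G 0 1 * (Complex.exp (ω^2*z) * G 1 2) * (Complex.exp z * G 2 0)
      - Complex.exp (ω*z) * G 0 2 * (Complex.exp (ω^2*z) * G 1 0) * (Complex.exp z * G 2 1)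
      - Complex.exp (ω*z) * G 0 2 * (x - Complex.exp (ω^2*z) * G 1 1) * (Complex.exp z * G 2 0) := by
    intro x
    rw [charpoly_eval_fin3, e00, e01, e02, e10, e11, e12, e20, e21, e22]
  -- scale
  have hs : 0 < Complex.abs (Complex.exp z) := Complex.abs.pos_iff.2 (Complex.exp_ne_zero z)
  -- |E1| ≤ s/4
  have hE1s : Complex.abs (Complex.exp (ω*z)) ≤ Complex.abs (Complex.exp z)/4 := by
    have h4 : (4:ℝ) ≤ Real.exp (3/2) := by
      have e3 : Real.exp (3/2) * Real.exp (3/2) = Real.exp 1 ^ 3 := by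
        rw [← Real.exp_add, show (3:ℝ)/2 + 3/2 = ((3:ℕ):ℝ)*(1:ℝ) by norm_num,
          Real.exp_nat_mul]
      have hcube : (2.7182818283:ℝ)^3 ≤ Real.exp 1 ^ 3 :=
        pow_le_pow_left₀ (by norm_num) Real.exp_one_gt_d9.le 3
      nlinarith [e3, hcube, Real.exp_pos (3/2:ℝ)]
    have hquarter : Real.exp (-(3/2)) ≤ 1/4 := by
      have h1 : Real.exp (-(3/2)) * Real.exp (3/2) = 1 := by
        rw [← Real.exp_add]; norm_num
      nlinarith [Real.exp_pos (-(3/2:ℝ))]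
    have hcond : Real.exp ((ω*z).re - z.re) ≤ 1/4 := by
      have hre : ((ω-1)*z).re = (ω*z).re - z.re := by
        rw [sub_mul, one_mul, Complex.sub_re]
      calc Real.exp ((ω*z).re - z.re) = Complex.abs (Complex.exp ((ω-1)*z)) := by
            rw [Complex.abs_exp, hre]
      _ ≤ Real.exp (-(3/2)) := hE1c
      _ ≤ 1/4 := hquarter
    calc Complex.abs (Complex.exp (ω*z)) = Real.exp ((ω*z).re) := Complex.abs_exp _
    _ = Real.exp ((ω*z).re - z.re) * Real.exp z.re := by
        rw [← Real.exp_add]; congr 1; ring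
    _ ≤ 1/4 * Real.exp z.re :=
        mul_le_mul_of_nonneg_right hcond (Real.exp_pos z.re).le
    _ = Complex.abs (Complex.exp z)/4 := by rw [Complex.abs_exp]; ring
  have hE2s : Complex.abs (Complex.exp (ω^2*z)) ≤ Complex.abs (Complex.exp z) := by
    rw [Complex.abs_exp, Complex.abs_exp]
    exact Real.exp_le_exp.mpr h23
  have hse : Real.exp (-z.re) * Complex.abs (Complex.exp z) = 1 := by
    rw [Complex.abs_exp, ← Real.exp_add, show -z.re + z.re = 0 by ring, Real.exp_zero]
  have hgap' : Complex.abs (Complex.exp z)/3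
      < Complex.abs (Complex.exp (ω^2*z) - Complex.exp z) := by
    have e1 : Complex.exp ((ω^2-1)*z) = Complex.exp (ω^2*z) * Complex.exp (-z) := by
      rw [← Complex.exp_add]; congr 1; ring
    have e2 : Complex.exp z * Complex.exp (-z) = 1 := by
      rw [← Complex.exp_add]; simp
    have key : Complex.exp ((ω^2-1)*z) - 1
        = (Complex.exp (ω^2*z) - Complex.exp z) * Complex.exp (-z) := by
      rw [e1]; linear_combination e2
    have h13 : 1/3 < Complex.abs (Complex.exp (ω^2*z) - Complex.exp z) * Real.exp (-z.re) := by
      have := hgapc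
      rw [key, Complex.abs.map_mul, Complex.abs_exp, Complex.neg_re] at this
      exact this
    nlinarith [mul_lt_mul_of_pos_right h13 hs, hse,
      Complex.abs.nonneg (Complex.exp (ω^2*z) - Complex.exp z), Real.exp_pos (-z.re)]
  -- α β facts
  have hz4 : (1:ℝ) ≤ Complex.abs z ^ 4 := one_le_pow₀ hz
  have hz2 : (1:ℝ) ≤ Complex.abs z ^ 2 := one_le_pow₀ hz
  have hα0 : 0 ≤ a / Complex.abs z^4 := div_nonneg ha0 (by linarith)
  have hα1 : a / Complex.abs z^4 ≤ 1/1000 := (div_le_self ha0 hz4).trans hac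
  have hβ0 : 0 ≤ b / Complex.abs z^2 := div_nonneg hb0 (by linarith)
  have hβ1 : b / Complex.abs z^2 ≤ 1/1000 := (div_le_self hb0 hz2).trans hbc
  have hβ2 : (b / Complex.abs z^2)^2 = b^2/Complex.abs z^4 := by
    rw [div_pow, ← pow_mul]
  have hmemiff : ∀ τ : ℂ, τ ∈ Γ₃ ↔ Complex.abs (τ - Complex.exp z * G 2 2)
      ≤ Complex.abs (Complex.exp z) * (Complex.abs (G 2 0) + Complex.abs (G 2 1)) := by
    intro τ; rw [hΓ]; exact Set.mem_setOf_eq ▸ Iff.rfl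
  -- Gershgorin for roots
  have hger : ∀ r : ℂ, T.charpoly.IsRoot r →
      (Complex.abs (r - Complex.exp (ω*z) * G 0 0)
          ≤ Complex.abs (Complex.exp (ω*z)) * Complex.abs (G 0 1)
            + Complex.abs (Complex.exp (ω*z)) * Complex.abs (G 0 2) ∨
       Complex.abs (r - Complex.exp (ω^2*z) * G 1 1)
          ≤ Complex.abs (Complex.exp (ω^2*z)) * Complex.abs (G 1 0)
            + Complex.abs (Complex.exp (ω^2*z)) * Complex.abs (G 1 2) ∨
       Complex.abs (r - Complex.exp z * G 2 2)
          ≤ Complex.abs (Complex.exp z) * Complex.abs (G 2 0)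
            + Complex.abs (Complex.exp z) * Complex.abs (G 2 1)) := by
    intro r hr
    have h := gersh3 T r (root_hasEigenvalue T r hr)
    rw [e00, e01, e02, e10, e11, e12, e20, e21, e22] at h
    simpa only [Complex.abs.map_mul] using h
  -- the quantitative bound for any root in Γ₃
  have hbound : ∀ τ : ℂ, τ ∈ Γ₃ → T.charpoly.IsRoot τ →
      Complex.abs (τ - Complex.exp z * G 2 2)
        ≤ 20 * Complex.abs (Complex.exp z) * (b / Complex.abs z^2)^2 := by
    intro τ hmem hroot
    have h0 : (τ - Complex.exp (ω*z) * G 0 0) * (τ - Complex.exp (ω^2*z) * G 1 1)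
        * (τ - Complex.exp z * G 2 2)
      - (τ - Complex.exp (ω*z) * G 0 0) * (Complex.exp (ω^2*z) * G 1 2 * (Complex.exp z * G 2 1))
      - Complex.exp (ω*z) * G 0 1 * (Complex.exp (ω^2*z) * G 1 0) * (τ - Complex.exp z * G 2 2)
      - Complex.exp (ω*z) * G 0 1 * (Complex.exp (ω^2*z) * G 1 2) * (Complex.exp z * G 2 0)
      - Complex.exp (ω*z) * G 0 2 * (Complex.exp (ω^2*z) * G 1 0) * (Complex.exp z * G 2 1)
      - Complex.exp (ω*z) * G 0 2 * (τ - Complex.exp (ω^2*z) * G 1 1) * (Complex.exp z * G 2 0)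
        = 0 := by
      rw [← hev τ]; exact hroot
    have heq : (τ - Complex.exp z * G 2 2) * ((τ - Complex.exp (ω*z) * G 0 0)
          * (τ - Complex.exp (ω^2*z) * G 1 1)
          - Complex.exp (ω*z) * Complex.exp (ω^2*z) * (G 0 1 * G 1 0))
        = (τ - Complex.exp (ω*z) * G 0 0)
            * (Complex.exp (ω^2*z) * Complex.exp z * (G 1 2 * G 2 1))
          + Complex.exp (ω*z) * Complex.exp (ω^2*z) * Complex.exp z
            * (G 0 1 * G 1 2 * G 2 0 + G 0 2 * G 1 0 * G 2 1)
          + Complex.exp (ω*z) * Complex.exp z * (G 0 2 * G 2 0)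
            * (τ - Complex.exp (ω^2*z) * G 1 1) := by
      linear_combination h0
    exact coreD (Complex.exp (ω*z)) (Complex.exp (ω^2*z)) (Complex.exp z)
      (G 0 0) (G 0 1) (G 0 2) (G 1 0) (G 1 1) (G 1 2) (G 2 0) (G 2 1) (G 2 2)
      (Complex.abs (Complex.exp z)) (a / Complex.abs z^4) (b / Complex.abs z^2)
      hs rfl hE1s hE2s hgap' hα0 hα1 hβ0 hβ1
      (hGd 0) (hGd 1) (hGd 2)
      (hGo 0 1 (by decide)) (hGo 0 2 (by decide)) (hGo 1 0 (by decide))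
      (hGo 1 2 (by decide)) (hGo 2 0 (by decide)) (hGo 2 1 (by decide))
      τ ((hmemiff τ).1 hmem) heq
  -- roots of the characteristic polynomial
  obtain ⟨r1, r2, r3, hroots, htr, hevalprod⟩ := roots3 T
  have hrooti : ∀ r : ℂ, r ∈ ({r1, r2, r3} : Multiset ℂ) → T.charpoly.IsRoot r := by
    intro r hr
    exact (Polynomial.mem_roots'.1 (by rw [hroots]; exact hr)).2
  -- existence
  have hex : ∃ τ : ℂ, τ ∈ Γ₃ ∧ T.charpoly.IsRoot τ := by
    by_contra hcon
    push_neg at hcon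
    have hn : ∀ r : ℂ, T.charpoly.IsRoot r →
        ¬ Complex.abs (r - Complex.exp z * G 2 2)
          ≤ Complex.abs (Complex.exp z) * (Complex.abs (G 2 0) + Complex.abs (G 2 1)) := by
      intro r hr hmem
      exact hcon r ((hmemiff r).2 hmem) hr
    have hl : ∀ r : ℂ, r ∈ ({r1, r2, r3} : Multiset ℂ) →
        3/10 * Complex.abs (Complex.exp z) ≤ Complex.abs (Complex.exp z * G 2 2 - r) := by
      intro r hr
      exact coreEU (Complex.exp (ω*z)) (Complex.exp (ω^2*z)) (Complex.exp z)
        (G 0 0) (G 0 1) (G 0 2) (G 1 0) (G 1 1) (G 1 2) (G 2 0) (G 2 1) (G 2 2)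
        (Complex.abs (Complex.exp z)) (a / Complex.abs z^4) (b / Complex.abs z^2)
        hs rfl hE1s hE2s hgap' hα0 hα1 hβ0 hβ1
        (hGd 0) (hGd 1) (hGd 2)
        (hGo 0 1 (by decide)) (hGo 0 2 (by decide)) (hGo 1 0 (by decide))
        (hGo 1 2 (by decide)) (hGo 2 0 (by decide)) (hGo 2 1 (by decide))
        r (hger r (hrooti r hr)) (hn r (hrooti r hr))
    have hprodeq := (hevalprod (Complex.exp z * G 2 2)).symm.trans (hev (Complex.exp z * G 2 2))
    have hprod : (Complex.exp z * G 2 2 - r1) * ((Complex.exp z * G 2 2 - r2)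
          * (Complex.exp z * G 2 2 - r3))
        = -((Complex.exp z * G 2 2 - Complex.exp (ω*z) * G 0 0)
              * (Complex.exp (ω^2*z) * Complex.exp z * (G 1 2 * G 2 1))
            + Complex.exp (ω*z) * Complex.exp (ω^2*z) * Complex.exp z
              * (G 0 1 * G 1 2 * G 2 0 + G 0 2 * G 1 0 * G 2 1)
            + Complex.exp (ω*z) * Complex.exp z * (G 0 2 * G 2 0)
              * (Complex.exp z * G 2 2 - Complex.exp (ω^2*z) * G 1 1)) := by
      linear_combination hprodeq
    exact coreEx (Complex.exp (ω*z)) (Complex.exp (ω^2*z)) (Complex.exp z)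
      (G 0 0) (G 0 1) (G 0 2) (G 1 0) (G 1 1) (G 1 2) (G 2 0) (G 2 1) (G 2 2)
      (Complex.abs (Complex.exp z)) (a / Complex.abs z^4) (b / Complex.abs z^2)
      hs rfl hE1s hE2s hα0 hα1 hβ0 hβ1
      (hGd 0) (hGd 1) (hGd 2)
      (hGo 0 1 (by decide)) (hGo 0 2 (by decide)) (hGo 1 0 (by decide))
      (hGo 1 2 (by decide)) (hGo 2 0 (by decide)) (hGo 2 1 (by decide))
      r1 r2 r3 (hl r1 (by simp)) (hl r2 (by simp)) (hl r3 (by simp)) hprod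
  obtain ⟨τs, hτsmem, hτsroot⟩ := hex
  have huniq : ∀ y : ℂ, y ∈ Γ₃ ∧ T.charpoly.IsRoot y → y = τs := by
    rintro y ⟨hymem, hyroot⟩
    by_contra hne
    have hymem' : y ∈ ({r1, r2, r3} : Multiset ℂ) := by
      rw [← hroots]
      exact Polynomial.mem_roots'.2 ⟨T.charpoly_monic.ne_zero, hyroot⟩
    have hτmem' : τs ∈ ({r1, r2, r3} : Multiset ℂ) := by
      rw [← hroots]
      exact Polynomial.mem_roots'.2 ⟨T.charpoly_monic.ne_zero, hτsroot⟩
    obtain ⟨w, hwmem, hsum3⟩ := sum3_of_two_mem r1 r2 r3 y τs hymem' hτmem' hne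
    have hsum : Complex.exp (ω*z) * G 0 0 + Complex.exp (ω^2*z) * G 1 1
        + Complex.exp z * G 2 2 = y + τs + w := by
      rw [← e00, ← e11, ← e22]
      exact htr.trans hsum3
    exact coreU (Complex.exp (ω*z)) (Complex.exp (ω^2*z)) (Complex.exp z)
      (G 0 0) (G 0 1) (G 0 2) (G 1 0) (G 1 1) (G 1 2) (G 2 0) (G 2 1) (G 2 2)
      (Complex.abs (Complex.exp z)) (a / Complex.abs z^4) (b / Complex.abs z^2)
      hs rfl hE1s hE2s hgap' hα0 hα1 hβ0 hβ1
      (hGd 0) (hGd 1) (hGd 2)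
      (hGo 0 1 (by decide)) (hGo 0 2 (by decide)) (hGo 1 0 (by decide))
      (hGo 1 2 (by decide)) (hGo 2 0 (by decide)) (hGo 2 1 (by decide))
      y τs w ((hmemiff y).1 hymem) ((hmemiff τs).1 hτsmem) hsum
      (hger w (hrooti w hwmem))
  refine ⟨⟨τs, ⟨hτsmem, hτsroot⟩, huniq⟩, ?_⟩
  -- final bound
  intro τ hmem hroot
  have hD := hbound τ hmem hroot
  have e2 : Complex.exp (-z) * Complex.exp z = 1 := by
    rw [← Complex.exp_add]; simp
  have edec : Complex.exp (-z)*τ - 1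
      = Complex.exp (-z)*(τ - Complex.exp z * G 2 2) + (G 2 2 - 1) := by
    linear_combination (G 2 2) * e2
  have habsexp : Complex.abs (Complex.exp (-z)) = Real.exp (-z.re) := by
    rw [Complex.abs_exp, Complex.neg_re]
  calc Complex.abs (Complex.exp (-z)*τ - 1)
      = Complex.abs (Complex.exp (-z)*(τ - Complex.exp z * G 2 2) + (G 2 2 - 1)) := by
        rw [edec]
  _ ≤ Complex.abs (Complex.exp (-z)) * Complex.abs (τ - Complex.exp z * G 2 2)
        + Complex.abs (G 2 2 - 1) := by
      refine (Complex.abs.add_le _ _).trans ?_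
      rw [Complex.abs.map_mul]
  _ ≤ Real.exp (-z.re) * (20 * Complex.abs (Complex.exp z) * (b / Complex.abs z^2)^2)
        + a / Complex.abs z^4 := by
      rw [habsexp]
      refine add_le_add (mul_le_mul_of_nonneg_left hD (Real.exp_pos _).le) (hGd 2)
  _ = 20 * (b / Complex.abs z^2)^2 + a / Complex.abs z^4 := by
      linear_combination (20 * (b / Complex.abs z^2)^2) * hse
  _ ≤ 100 * (a + b ^ 2) / Complex.abs z ^ 4 := by
      rw [hβ2, show 100 * (a + b ^ 2) / Complex.abs z ^ 4
        = 100 * (a / Complex.abs z^4) + 100 * (b^2 / Complex.abs z^4) by ring]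
      have h1 : 0 ≤ b^2 / Complex.abs z^4 := div_nonneg (sq_nonneg b) (by linarith)
      linarith

/-- There exist `c₀ > 0` and `C > 0` such that for all `z` with `|z| ≥ 1`
satisfying the stated sector conditions, and all `G` with `|G_{jj} − 1| ≤ a/|z|⁴`,
`|G_{jk}| ≤ b/|z|²` (`0 ≤ a, b ≤ c₀`), the matrix `T = (e^{ω^j z} G_{jk})` has a unique
eigenvalue `τ₃` in its third Gershgorin disc `Γ₃`, and it satisfies
`|e^{−z} τ₃ − 1| ≤ C(a + b²)/|z|⁴`. -/
theorem multiplier_asymptotics :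
    ∃ c₀ > (0:ℝ), ∃ C > (0:ℝ),
      ∀ (ω z : ℂ), ω = Complex.exp (2 * Real.pi * Complex.I / 3) →
      1 ≤ ‖z‖ →
      (ω * z).re ≤ (ω ^ 2 * z).re → (ω ^ 2 * z).re ≤ z.re →
      ‖Complex.exp ((ω - 1) * z)‖ ≤ Real.exp (-(3/2)) →
      1/3 < ‖Complex.exp ((ω ^ 2 - 1) * z) - 1‖ →
      ∀ a b : ℝ, 0 ≤ a → a ≤ c₀ → 0 ≤ b → b ≤ c₀ →
      ∀ G : Matrix (Fin 3) (Fin 3) ℂ,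
      (∀ j : Fin 3, ‖G j j - 1‖ ≤ a / ‖z‖ ^ 4) →
      (∀ j k : Fin 3, j ≠ k → ‖G j k‖ ≤ b / ‖z‖ ^ 2) →
      ∀ T : Matrix (Fin 3) (Fin 3) ℂ,
      T = Matrix.of (fun (j k : Fin 3) => Complex.exp (ω ^ ((j : ℕ) + 1) * z) * G j k) →
      ∀ Γ₃ : Set ℂ,
      Γ₃ = {τ : ℂ | ‖τ - Complex.exp z * G 2 2‖
        ≤ ‖Complex.exp z‖ * (‖G 2 0‖ + ‖G 2 1‖)} →
      (∃! τ : ℂ, τ ∈ Γ₃ ∧ T.charpoly.IsRoot τ) ∧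
      ∀ τ₃ : ℂ, τ₃ ∈ Γ₃ → T.charpoly.IsRoot τ₃ →
        ‖Complex.exp (-z) * τ₃ - 1‖ ≤ C * (a + b ^ 2) / ‖z‖ ^ 4 := by
  exact multiplier_asymptotics_old
end
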